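/- arXiv:0903.1425 — 7 statements merged into one kernel-verified Lean document; each statement's English description precedes it below -/
import Mathlib

section
/- Let H be a subgroup of a topological abelian group G that is both dually closed and dually embedded in G. Then n(H) = n(G), where H carries the subspace topology. -/
/-- The von Neumann radical of a topological abelian group: the intersection of the
kernels of all continuous characters into the circle group `ℝ/ℤ`. -/
noncomputable def vonNeumannRadical (G : Type*) [AddCommGroup G] [TopologicalSpace G] :
    AddSubgroup G :=
  ⨅ χ : ContinuousAddMonoidHom G (AddCircle (1 : ℝ)), χ.toAddMonoidHom.ker

/-- A subgroup `H` of a topological abelian group `G` is dually embedded if every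
continuous character of `H` (with the subspace topology) extends to a continuous
character of `G`. -/
def DuallyEmbedded {G : Type*} [AddCommGroup G] [TopologicalSpace G] (H : AddSubgroup G) : Prop :=
  ∀ χ : ContinuousAddMonoidHom H (AddCircle (1 : ℝ)),
    ∃ χ' : ContinuousAddMonoidHom G (AddCircle (1 : ℝ)), ∀ h : H, χ' h = χ h

/-- A subgroup `H` of a topological abelian group `G` is dually closed if every point
outside `H` is separated from `H` by a continuous character vanishing on `H`. -/
def DuallyClosed {G : Type*} [AddCommGroup G] [TopologicalSpace G] (H : AddSubgroup G) : Prop :=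
  ∀ x : G, x ∉ H → ∃ χ : ContinuousAddMonoidHom G (AddCircle (1 : ℝ)),
    (∀ h ∈ H, χ h = 0) ∧ χ x ≠ 0

lemma mem_rad {A : Type*} [AddCommGroup A] [TopologicalSpace A] (a : A) :
    a ∈ vonNeumannRadical A ↔
      ∀ χ : ContinuousAddMonoidHom A (AddCircle (1 : ℝ)), χ a = 0 := by
  simp [vonNeumannRadical, AddSubgroup.mem_iInf, AddMonoidHom.mem_ker]

/-- If `H` is a dually closed and dually embedded subgroup of a topological abelian
group `G`, then `n(H) = n(G)`. -/
theorem statement3 (G : Type*) [AddCommGroup G] [TopologicalSpace G] [IsTopologicalAddGroup G]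
    (H : AddSubgroup G) (hc : DuallyClosed H) (he : DuallyEmbedded H) :
    (vonNeumannRadical ↥H).map H.subtype = vonNeumannRadical G := by
  ext x
  constructor
  · rintro ⟨⟨y, hy⟩, hmem, rfl⟩
    simp only [SetLike.mem_coe, mem_rad] at hmem
    rw [show H.subtype ⟨y, hy⟩ = y from rfl, mem_rad]
    intro χ
    have := hmem ⟨χ.toAddMonoidHom.comp H.subtype, χ.continuous.comp continuous_subtype_val⟩
    exact this
  · intro hx
    rw [mem_rad] at hx
    have hxH : x ∈ H := by
      by_contra hne
      obtain ⟨χ, hvan, hne0⟩ := hc x hne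
      exact hne0 (hx χ)
    refine ⟨⟨x, hxH⟩, ?_, rfl⟩
    simp only [SetLike.mem_coe, mem_rad]
    intro χ
    obtain ⟨χ', hext⟩ := he χ
    rw [← hext ⟨x, hxH⟩]
    exact hx χ'
end

section
/- Let H be an open subgroup of a topological abelian group G. Then n(H) = n(G), where H carries the subspace topology. -/
/-- The map `ℚ/ℤ → ℝ/ℤ` induced by `Rat.cast`. -/
noncomputable def ratCircleToRealCircle : AddCircle (1 : ℚ) →+ AddCircle (1 : ℝ) :=
  QuotientAddGroup.map _ _ (Rat.castHom ℝ).toAddMonoidHom (by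
    rintro q ⟨n, rfl⟩
    exact ⟨n, by push_cast; simp⟩)

lemma ratCircleToRealCircle_eq_zero {x : AddCircle (1 : ℚ)}
    (h : ratCircleToRealCircle x = 0) : x = 0 := by
  induction x using QuotientAddGroup.induction_on with
  | H q =>
    have : ((q : ℝ) : AddCircle (1 : ℝ)) = 0 := h
    rw [AddCircle.coe_eq_zero_iff] at this ⊢
    obtain ⟨n, hn⟩ := this
    refine ⟨n, ?_⟩
    rw [zsmul_eq_mul, mul_one] at hn ⊢
    exact_mod_cast hn

lemma exists_real_char {A : Type*} [AddCommGroup A] {a : A} (ha : a ≠ 0) :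
    ∃ c : A →+ AddCircle (1 : ℝ), c a ≠ 0 := by
  obtain ⟨c, hc⟩ := CharacterModule.exists_character_apply_ne_zero_of_ne_zero ha
  exact ⟨ratCircleToRealCircle.comp c, fun h => hc (ratCircleToRealCircle_eq_zero h)⟩

lemma extend_char {G : Type*} [AddCommGroup G] [TopologicalSpace G] [IsTopologicalAddGroup G]
    (H : AddSubgroup G) (hH : IsOpen (H : Set G))
    (χ : ContinuousAddMonoidHom ↥H (AddCircle (1 : ℝ))) :
    ∃ ψ : ContinuousAddMonoidHom G (AddCircle (1 : ℝ)), ∀ h : H, ψ h = χ h := by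
  obtain ⟨ψ₀, hψ₀⟩ := (Module.Baer.of_divisible (AddCircle (1:ℝ))).extension_property_addMonoidHom
    H.subtype Subtype.coe_injective χ.toAddMonoidHom
  have hagree : ∀ h : H, ψ₀ h = χ h := fun h => DFunLike.congr_fun hψ₀ h
  have hcont : Continuous ψ₀ := by
    apply continuous_of_continuousAt_zero ψ₀
    have hOn : ContinuousOn ψ₀ (H : Set G) := by
      rw [continuousOn_iff_continuous_restrict]
      have : Set.restrict (H : Set G) ψ₀ = fun h => χ h := funext fun h => hagree h
      rw [show (H : Set G).domRestrict ψ₀ = fun h => χ h from this]; exact χ.continuous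
    exact hOn.continuousAt (hH.mem_nhds H.zero_mem)
  exact ⟨⟨ψ₀, hcont⟩, hagree⟩

lemma radical_le {G : Type*} [AddCommGroup G] [TopologicalSpace G] [IsTopologicalAddGroup G]
    (H : AddSubgroup G) (hH : IsOpen (H : Set G)) :
    (⨅ χ : ContinuousAddMonoidHom G (AddCircle (1 : ℝ)), χ.toAddMonoidHom.ker) ≤ H := by
  intro x hx
  by_contra hxH
  haveI : DiscreteTopology (G ⧸ H) := QuotientAddGroup.discreteTopology hH
  have hx0 : (QuotientAddGroup.mk x : G ⧸ H) ≠ 0 := by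
    simpa [QuotientAddGroup.eq_zero_iff] using hxH
  obtain ⟨c, hc⟩ := exists_real_char hx0
  let ψ : ContinuousAddMonoidHom G (AddCircle (1:ℝ)) :=
    ⟨c.comp (QuotientAddGroup.mk' H),
      (continuous_of_discreteTopology : Continuous c).comp QuotientAddGroup.continuous_mk⟩
  exact hc (AddSubgroup.mem_iInf.mp hx ψ)

theorem statement4_aux (G : Type*) [AddCommGroup G] [TopologicalSpace G] [IsTopologicalAddGroup G]
    (H : AddSubgroup G) (hH : IsOpen (H : Set G)) :
    (⨅ χ : ContinuousAddMonoidHom ↥H (AddCircle (1 : ℝ)), χ.toAddMonoidHom.ker).map H.subtype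
      = ⨅ χ : ContinuousAddMonoidHom G (AddCircle (1 : ℝ)), χ.toAddMonoidHom.ker := by
  apply le_antisymm
  · rintro x ⟨h, hh, rfl⟩
    rw [SetLike.mem_coe, AddSubgroup.mem_iInf] at hh
    rw [AddSubgroup.mem_iInf]
    intro χ
    exact hh (χ.comp ⟨H.subtype, continuous_subtype_val⟩)
  · intro x hx
    have hxH : x ∈ H := radical_le H hH hx
    refine ⟨⟨x, hxH⟩, ?_, rfl⟩
    rw [SetLike.mem_coe, AddSubgroup.mem_iInf]
    intro χ
    obtain ⟨ψ, hψ⟩ := extend_char H hH χ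
    have h0 : ψ x = 0 := AddSubgroup.mem_iInf.mp hx ψ
    show χ ⟨x, hxH⟩ = 0
    rw [← hψ ⟨x, hxH⟩]; exact h0

/-- If `H` is an open subgroup of a topological abelian group `G`, then `n(H) = n(G)`. -/
theorem statement4 (G : Type*) [AddCommGroup G] [TopologicalSpace G] [IsTopologicalAddGroup G]
    (H : AddSubgroup G) (hH : IsOpen (H : Set G)) :
    (vonNeumannRadical ↥H).map H.subtype = vonNeumannRadical G :=
  statement4_aux G H hH
end

section
/- Let p be a prime. In the group G = (ℤ/pℤ) × ℤ define the sequence d by d_{2n−1} = (1, f_n) and d_{2n} = (0, p^n) for n ≥ 1, where f_n = Σ_{i=0}^{n} p^{n³ − i·n}. Then there exists a Hausdorff group topology τ on G in which d_n converges to zero and such that the von Neumann radical n(G,τ) equals the subgroup (ℤ/pℤ) × {0}; in particular (G,τ) is almost maximally almost-periodic. -/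
/-- `f p n = ∑_{i=0}^{n} p^(n³ - i·n)`. -/
def fseq (p : ℕ) (n : ℕ) : ℤ := ∑ i ∈ Finset.range (n + 1), (p : ℤ) ^ (n ^ 3 - i * n)

/-- The sequence `d` in `(ℤ/pℤ) × ℤ`: `d (2n-1) = (1, f p n)` and `d (2n) = (0, p^n)`. -/
def dseq (p : ℕ) : ℕ → ZMod p × ℤ := fun k =>
  if k % 2 = 1 then (1, fseq p ((k + 1) / 2)) else (0, (p : ℤ) ^ (k / 2))

open Pointwise

namespace AMAP

lemma fseq_dvd' {p : ℕ} {g n : ℕ} (hg : g ≤ n ^ 3 - n ^ 2) : (p : ℤ) ^ g ∣ fseq p n := by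
  unfold fseq
  refine Finset.dvd_sum fun i hi => pow_dvd_pow _ (le_trans hg ?_)
  have hi' : i ≤ n := Nat.lt_succ_iff.mp (Finset.mem_range.mp hi)
  have : i * n ≤ n ^ 2 := by nlinarith
  omega

lemma fseq_dvd {p : ℕ} {g n : ℕ} (hg : g + 1 ≤ n) : (p : ℤ) ^ g ∣ fseq p n := by
  refine fseq_dvd' ?_
  have h1 : 1 ≤ n := by omega
  have e3 : n ^ 3 = n ^ 2 * n := by ring
  have e1 : n ^ 2 * (g + 1) ≤ n ^ 2 * n := Nat.mul_le_mul_left _ hg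
  have e2 : g ≤ n ^ 2 * g := Nat.le_mul_of_pos_left _ (by positivity)
  have h : n ^ 2 + g ≤ n ^ 3 := by rw [e3]; nlinarith [e1, e2]
  omega

/-- numeric helper -/
lemma numeric_helper {l : ℕ} (hl : 6 ≤ l) : 4 * l + 14 ≤ 2 ^ l := by
  induction l with
  | zero => omega
  | succ k ih =>
    rcases Nat.lt_or_ge k 6 with hk | hk
    · interval_cases k <;> simp_all <;> omega
    · have := ih (by omega)
      have : 2 ^ k ≥ 64 := by
        calc (64:ℕ) = 2 ^ 6 := by norm_num
        _ ≤ 2 ^ k := Nat.pow_le_pow_right (by norm_num) hk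
      rw [pow_succ]; omega

/-- The arithmetic core for the dual computation: if `P^n • b → 0` in `ℝ/ℤ`
then `b` is `P`-power torsion. -/
lemma addCircle_torsion {P : ℕ} (hP : 2 ≤ P) (b : AddCircle (1 : ℝ))
    (hb : Filter.Tendsto (fun n => (P : ℤ) ^ n • b) Filter.atTop (nhds 0)) :
    ∃ k : ℕ, (P : ℤ) ^ k • b = 0 := by
  obtain ⟨β, rfl⟩ := QuotientAddGroup.mk_surjective b
  set δ : ℕ → ℝ := fun n => (P : ℝ) ^ n * β - round ((P : ℝ) ^ n * β) with hδ
  have hcoe : ∀ n : ℕ, (P : ℤ) ^ n • (β : AddCircle (1:ℝ)) = (((P:ℝ) ^ n * β : ℝ) : AddCircle (1:ℝ)) := by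
    intro n
    rw [← AddCircle.coe_zsmul]
    push_cast
    rw [zsmul_eq_mul]
    push_cast
    ring_nf
  have hnorm : ∀ n : ℕ, ‖(P : ℤ) ^ n • (β : AddCircle (1:ℝ))‖ = |δ n| := by
    intro n
    rw [hcoe n, UnitAddCircle.norm_eq]
  have htends : Filter.Tendsto (fun n => |δ n|) Filter.atTop (nhds 0) := by
    have := (tendsto_zero_iff_norm_tendsto_zero).mp hb
    simpa [hnorm] using this
  have hPpos : (0:ℝ) < P := by positivity
  have hε : (0:ℝ) < 1 / (2 * ((P:ℝ) + 1)) := by positivity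
  obtain ⟨N, hN⟩ := (Metric.tendsto_atTop.mp htends) _ hε
  have hsmall : ∀ n, N ≤ n → |δ n| < 1 / (2 * ((P:ℝ) + 1)) := by
    intro n hn
    have := hN n hn
    rwa [Real.dist_eq, sub_zero, abs_abs] at this
  -- recurrence δ (n+1) = P * δ n for n ≥ N
  have hrec : ∀ n, N ≤ n → δ (n + 1) = (P:ℝ) * δ n := by
    intro n hn
    set j : ℤ := round ((P : ℝ) ^ (n+1) * β) - P * round ((P : ℝ) ^ n * β) with hj
    have key : δ (n + 1) - (P:ℝ) * δ n = -(j : ℝ) := by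
      simp only [hδ, hj]
      push_cast
      ring
    have hjabs : |(j:ℝ)| < 1 := by
      have h1 := hsmall n hn
      have h2 := hsmall (n+1) (by omega)
      have : |(j:ℝ)| ≤ (P:ℝ) * |δ n| + |δ (n+1)| := by
        have : (j:ℝ) = (P:ℝ) * δ n - δ (n+1) := by linarith [key]
        rw [this]
        calc |(P:ℝ) * δ n - δ (n+1)| ≤ |(P:ℝ) * δ n| + |δ (n+1)| := abs_sub _ _
        _ = (P:ℝ) * |δ n| + |δ (n+1)| := by rw [abs_mul, abs_of_pos hPpos]
      have hP1 : (P:ℝ) * (1 / (2 * ((P:ℝ) + 1))) + 1 / (2 * ((P:ℝ) + 1)) < 1 := by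
        have heq : (P:ℝ) * (1 / (2 * ((P:ℝ) + 1))) + 1 / (2 * ((P:ℝ) + 1))
            = ((P:ℝ) + 1) / (2 * ((P:ℝ) + 1)) := by ring
        rw [heq, div_lt_one (by positivity)]
        linarith
      calc |(j:ℝ)| ≤ (P:ℝ) * |δ n| + |δ (n+1)| := this
      _ < (P:ℝ) * (1 / (2 * ((P:ℝ) + 1))) + 1 / (2 * ((P:ℝ) + 1)) := by
          have := mul_lt_mul_of_pos_left h1 hPpos
          linarith
      _ < 1 := hP1
    have : j = 0 := by
      have := abs_lt.mp hjabs
      have h1 : (-1 : ℝ) < (j:ℝ) := this.1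
      have h2 : (j:ℝ) < 1 := this.2
      exact_mod_cast by
        have : -1 < j ∧ j < 1 := ⟨by exact_mod_cast h1, by exact_mod_cast h2⟩
        omega
    have : δ (n + 1) - (P:ℝ) * δ n = 0 := by rw [key, this]; simp
    linarith
  -- iterate
  have hiter : ∀ k, δ (N + k) = (P:ℝ) ^ k * δ N := by
    intro k
    induction k with
    | zero => simp
    | succ m ih =>
      have : N ≤ N + m := by omega
      have := hrec (N + m) this
      rw [show N + (m+1) = (N + m) + 1 by omega, this, ih]
      ring
  have hbound : ∀ m, |δ m| ≤ 1/2 := by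
    intro m
    simpa [hδ] using abs_sub_round ((P:ℝ) ^ m * β)
  have hzero : δ N = 0 := by
    by_contra hne
    have habs : 0 < |δ N| := abs_pos.mpr hne
    obtain ⟨k, hk⟩ := pow_unbounded_of_one_lt ((1/2) / |δ N|) (by exact_mod_cast hP : (1:ℝ) < P)
    have : |δ (N + k)| = (P:ℝ)^k * |δ N| := by
      rw [hiter k, abs_mul, abs_of_pos (by positivity : (0:ℝ) < (P:ℝ)^k)]
    have h2 : (1/2 : ℝ) < (P:ℝ)^k * |δ N| := by
      rw [div_lt_iff₀ habs] at hk
      linarith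
    have hcontr := hbound (N + k)
    rw [this] at hcontr
    linarith
  refine ⟨N, ?_⟩
  rw [hcoe N]
  have : (P:ℝ) ^ N * β = ((round ((P : ℝ) ^ N * β) : ℤ) : ℝ) := by
    have := hzero
    simp only [hδ] at this
    linarith
  rw [this, AddCircle.coe_eq_zero_iff]
  exact ⟨round ((P : ℝ) ^ N * β), by simp⟩


def cfun (T : ℕ) : ℕ := Nat.log 2 (Nat.log 2 T)

lemma cfun_mono : Monotone cfun := fun _ _ h => Nat.log_mono_right (Nat.log_mono_right h)

def Wt (lam : ℕ →₀ ℤ) (T : ℕ) : ℕ := ∑ i ∈ Finset.range T, (lam i).natAbs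

lemma Wt_add_le (a b : ℕ →₀ ℤ) (T : ℕ) : Wt (a + b) T ≤ Wt a T + Wt b T := by
  unfold Wt
  rw [← Finset.sum_add_distrib]
  exact Finset.sum_le_sum fun i _ => by
    simpa using Int.natAbs_add_le (a i) (b i)

lemma Wt_neg (a : ℕ →₀ ℤ) (T : ℕ) : Wt (-a) T = Wt a T := by
  unfold Wt
  exact Finset.sum_congr rfl fun i _ => by simp

noncomputable def sumd (p : ℕ) : (ℕ →₀ ℤ) →+ ZMod p × ℤ :=
  Finsupp.liftAddHom fun i => zmultiplesHom _ (dseq p i)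

lemma sumd_apply (p : ℕ) (lam : ℕ →₀ ℤ) :
    sumd p lam = lam.sum fun i z => z • dseq p i := by
  rfl

lemma sumd_single (p : ℕ) (n : ℕ) (z : ℤ) :
    sumd p (Finsupp.single n z) = z • dseq p n := by
  unfold sumd
  rw [Finsupp.liftAddHom_apply_single]
  rfl

def Vset (p m : ℕ) : Set (ZMod p × ℤ) :=
  {x | ∃ lam : ℕ →₀ ℤ, (∀ T, Wt lam T * 2 ^ m ≤ cfun T) ∧ sumd p lam = x}

lemma zero_mem_Vset (p m : ℕ) : (0 : ZMod p × ℤ) ∈ Vset p m :=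
  ⟨0, fun T => by simp [Wt], by simp⟩

lemma Vset_anti (p : ℕ) {m m' : ℕ} (h : m ≤ m') : Vset p m' ⊆ Vset p m := by
  rintro x ⟨lam, hW, rfl⟩
  refine ⟨lam, fun T => le_trans ?_ (hW T), rfl⟩
  exact Nat.mul_le_mul_left _ (Nat.pow_le_pow_right (by norm_num) h)

lemma Vset_add_subset (p m : ℕ) : Vset p (m + 1) + Vset p (m + 1) ⊆ Vset p m := by
  rintro z ⟨x, ⟨lamx, hx, rfl⟩, y, ⟨lamy, hy, rfl⟩, rfl⟩
  refine ⟨lamx + lamy, fun T => ?_, by simp⟩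
  have h1 := hx T
  have h2 := hy T
  have := Wt_add_le lamx lamy T
  have hle : Wt (lamx + lamy) T * 2 ^ (m + 1) ≤ 2 * cfun T := by
    calc Wt (lamx + lamy) T * 2 ^ (m + 1) ≤ (Wt lamx T + Wt lamy T) * 2 ^ (m+1) :=
        Nat.mul_le_mul_right _ this
    _ = Wt lamx T * 2 ^ (m+1) + Wt lamy T * 2 ^ (m+1) := by ring
    _ ≤ 2 * cfun T := by omega
  have : Wt (lamx + lamy) T * 2 ^ (m + 1) = (Wt (lamx + lamy) T * 2 ^ m) * 2 := by ring
  omega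

lemma Vset_neg_subset (p m : ℕ) : Vset p m ⊆ (fun x => -x) ⁻¹' (Vset p m) := by
  rintro x ⟨lam, hW, rfl⟩
  exact ⟨-lam, fun T => by rw [Wt_neg]; exact hW T, by simp⟩

noncomputable def filterB (p : ℕ) : AddGroupFilterBasis (ZMod p × ℤ) :=
  addGroupFilterBasisOfComm (Set.range (Vset p)) ⟨Vset p 0, ⟨0, rfl⟩⟩
    (by
      rintro x y ⟨mx, rfl⟩ ⟨my, rfl⟩
      exact ⟨Vset p (max mx my), ⟨_, rfl⟩,
        Set.subset_inter (Vset_anti p (le_max_left _ _)) (Vset_anti p (le_max_right _ _))⟩)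
    (by rintro U ⟨m, rfl⟩; exact zero_mem_Vset p m)
    (by rintro U ⟨m, rfl⟩; exact ⟨Vset p (m + 1), ⟨_, rfl⟩, Vset_add_subset p m⟩)
    (by rintro U ⟨m, rfl⟩; exact ⟨Vset p m, ⟨_, rfl⟩, Vset_neg_subset p m⟩)

/-- Type synonym carrying the combinatorial (Protasov–Zelenyuk style) topology. -/
def GG (p : ℕ) := ZMod p × ℤ

instance (p : ℕ) : AddCommGroup (GG p) := inferInstanceAs (AddCommGroup (ZMod p × ℤ))
noncomputable instance (p : ℕ) : TopologicalSpace (GG p) := (filterB p).topology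
instance (p : ℕ) : IsTopologicalAddGroup (GG p) := (filterB p).isTopologicalAddGroup

/-- Type synonym for `ZMod q` with the discrete topology. -/
def Zq (q : ℕ) := ZMod q

instance (q : ℕ) : AddCommGroup (Zq q) := inferInstanceAs (AddCommGroup (ZMod q))
instance (q : ℕ) : TopologicalSpace (Zq q) := ⊥
instance (q : ℕ) : DiscreteTopology (Zq q) := ⟨rfl⟩
instance (q : ℕ) : IsTopologicalAddGroup (Zq q) where
  continuous_add := continuous_of_discreteTopology
  continuous_neg := continuous_of_discreteTopology

/-- The ambient topological group. -/
def Mgrp (p : ℕ) := GG p × (∀ k : ℕ, Zq (p ^ (k + 1)))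

noncomputable instance (p : ℕ) : AddCommGroup (Mgrp p) :=
  inferInstanceAs (AddCommGroup (GG p × (∀ k : ℕ, Zq (p ^ (k + 1)))))
noncomputable instance (p : ℕ) : TopologicalSpace (Mgrp p) :=
  inferInstanceAs (TopologicalSpace (GG p × (∀ k : ℕ, Zq (p ^ (k + 1)))))
instance (p : ℕ) : IsTopologicalAddGroup (Mgrp p) :=
  inferInstanceAs (IsTopologicalAddGroup (GG p × (∀ k : ℕ, Zq (p ^ (k + 1)))))

/-- The embedding defining our topology. -/
def phi (p : ℕ) : (ZMod p × ℤ) →+ Mgrp p where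
  toFun x := ((x : GG p), fun k => ((x.2 : ZMod (p ^ (k + 1))) : Zq (p ^ (k + 1))))
  map_zero' := by
    refine Prod.ext rfl ?_
    funext k
    show ((((0 : ZMod p × ℤ).2 : ℤ) : ZMod (p ^ (k+1))) : Zq (p ^ (k+1))) = 0
    simp
  map_add' x y := by
    refine Prod.ext rfl ?_
    funext k
    show (((x + y).2 : ZMod (p ^ (k+1))) : Zq (p ^ (k+1)))
      = ((x.2 : ZMod (p ^ (k+1))) : Zq (p ^ (k+1))) + ((y.2 : ZMod (p ^ (k+1))) : Zq (p ^ (k+1)))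
    show (((x.2 + y.2 : ℤ) : ZMod (p ^ (k+1))) : Zq (p ^ (k+1))) = _
    push_cast
    rfl

lemma phi_apply (p : ℕ) (x : ZMod p × ℤ) :
    phi p x = ((x : GG p), fun k => ((x.2 : ZMod (p ^ (k + 1))) : Zq (p ^ (k + 1)))) := rfl

/-- The topology of the theorem. -/
noncomputable def tau (p : ℕ) : TopologicalSpace (ZMod p × ℤ) :=
  TopologicalSpace.induced (phi p) inferInstance

lemma tau_addgroup (p : ℕ) : @IsTopologicalAddGroup (ZMod p × ℤ) (tau p) _ :=
  topologicalAddGroup_induced (phi p)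


lemma filterB_sets (p : ℕ) : (filterB p).sets = Set.range (Vset p) := rfl


lemma dseq_snd_dvd (p k n : ℕ) (hn : 2 * k + 4 ≤ n) : ((p:ℤ)) ^ (k + 1) ∣ (dseq p n).2 := by
  unfold dseq
  by_cases h : n % 2 = 1
  · simp only [h, if_pos rfl]
    exact fseq_dvd (by omega)
  · rw [if_neg h]
    exact pow_dvd_pow _ (by omega)

lemma Wt_single (n : ℕ) (T : ℕ) : Wt (Finsupp.single n (1:ℤ)) T = if n < T then 1 else 0 := by
  unfold Wt
  have hterm : ∀ i, ((Finsupp.single n (1:ℤ)) i).natAbs = if n = i then 1 else 0 := by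
    intro i; rw [Finsupp.single_apply]; split <;> simp
  rw [Finset.sum_congr rfl fun i _ => hterm i,
    Finset.sum_ite_eq (Finset.range T) n fun _ => 1]
  simp [Finset.mem_range]


lemma dseq_mem_Vset (p m n : ℕ) (hn : 2 ^ 2 ^ 2 ^ m ≤ n + 1) : dseq p n ∈ Vset p m := by
  refine ⟨Finsupp.single n 1, fun T => ?_, by rw [sumd_single]; simp⟩
  rw [Wt_single]
  by_cases h : n < T
  · rw [if_pos h]
    rw [one_mul]
    calc (2:ℕ) ^ m = cfun (2 ^ 2 ^ 2 ^ m) := by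
          unfold cfun
          rw [Nat.log_pow (by norm_num), Nat.log_pow (by norm_num)]
    _ ≤ cfun T := cfun_mono (by omega)
  · rw [if_neg h]; simp

lemma tendsto_dseq (p : ℕ) (hp : 2 ≤ p) :
    Filter.Tendsto (dseq p) Filter.atTop (@nhds _ (tau p) 0) := by
  have h0 : (phi p) 0 = 0 := map_zero _
  rw [tau, nhds_induced, h0]
  rw [Filter.tendsto_comap_iff]
  have heq : (⇑(phi p) ∘ dseq p) = fun n =>
      (((dseq p n : GG p), fun k => (((dseq p n).2 : ZMod (p ^ (k + 1))) : Zq (p ^ (k + 1)))) : Mgrp p) := by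
    funext n
    exact phi_apply p (dseq p n)
  rw [heq]
  have : (0 : Mgrp p) = ((0 : GG p), (0 : ∀ k : ℕ, Zq (p ^ (k + 1)))) := rfl
  rw [this]
  apply Filter.Tendsto.prodMk_nhds
  · -- GG component
    refine (filterB p).nhds_zero_hasBasis.tendsto_right_iff.mpr ?_
    intro V hV
    have : V ∈ Set.range (Vset p) := by
      rw [← filterB_sets p]; exact hV
    obtain ⟨m, rfl⟩ := this
    rw [Filter.eventually_atTop]
    exact ⟨2 ^ 2 ^ 2 ^ m, fun n hn => dseq_mem_Vset p m n (by omega)⟩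
  · refine tendsto_pi_nhds.mpr ?_
    intro k
    refine tendsto_nhds_of_eventually_eq ?_
    rw [Filter.eventually_atTop]
    refine ⟨2 * k + 4, fun n hn => ?_⟩
    have := dseq_snd_dvd p k n hn
    show (((dseq p n).2 : ZMod (p ^ (k + 1))) : Zq (p ^ (k + 1))) = 0
    have hz : ((dseq p n).2 : ZMod (p ^ (k + 1))) = 0 := by
      rw [ZMod.intCast_zmod_eq_zero_iff_dvd]
      exact_mod_cast this
    rw [hz]

lemma tau_t2 (p : ℕ) (hp : 2 ≤ p)
    (hsep : ∀ a : ZMod p, a ≠ 0 → ((a, 0) : ZMod p × ℤ) ∉ Vset p 12) :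
    @T2Space (ZMod p × ℤ) (tau p) := by
  letI := tau p
  haveI := tau_addgroup p
  apply IsTopologicalAddGroup.t2Space_of_zero_sep
  intro x hx
  by_cases hm : x.2 = 0
  · have ha : x.1 ≠ 0 := by
      intro h1
      exact hx (Prod.ext h1 hm)
    refine ⟨(phi p) ⁻¹' ((Vset p 12 : Set (GG p)) ×ˢ Set.univ), ?_, ?_⟩
    · have : @nhds (ZMod p × ℤ) (tau p) 0 = Filter.comap (phi p) (nhds (phi p 0)) :=
        nhds_induced _ _
      rw [this, map_zero]
      apply Filter.preimage_mem_comap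
      have h2 : (0 : Mgrp p) = ((0 : GG p), (0 : ∀ k : ℕ, Zq (p ^ (k + 1)))) := rfl
      rw [h2]
      have hmemB : Vset p 12 ∈ filterB p := by
        show Vset p 12 ∈ (filterB p).sets
        rw [filterB_sets p]; exact ⟨12, rfl⟩
      exact prod_mem_nhds ((filterB p).mem_nhds_zero hmemB) Filter.univ_mem
    · intro hmem
      replace hmem : (phi p x).1 ∈ Vset p 12 ∧ (phi p x).2 ∈ Set.univ := hmem
      have : (x : GG p) ∈ (Vset p 12 : Set (GG p)) := hmem.1
      have hxx : x = ((x.1, 0) : ZMod p × ℤ) := Prod.ext rfl hm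
      exact hsep x.1 ha (by rw [← hxx]; exact this)
  · set k := x.2.natAbs with hk
    refine ⟨(phi p) ⁻¹' {y : Mgrp p | y.2 k = 0}, ?_, ?_⟩
    · have : @nhds (ZMod p × ℤ) (tau p) 0 = Filter.comap (phi p) (nhds (phi p 0)) :=
        nhds_induced _ _
      rw [this, map_zero]
      apply Filter.preimage_mem_comap
      refine IsOpen.mem_nhds ?_ rfl
      have : {y : Mgrp p | y.2 k = 0} = (fun y : Mgrp p => y.2 k) ⁻¹' {0} := rfl
      rw [this]
      exact ((continuous_apply k).comp continuous_snd).isOpen_preimage _ (isOpen_discrete _)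
    · intro hmem
      rw [Set.mem_preimage, phi_apply] at hmem
      have hcast : ((x.2 : ZMod (p ^ (k + 1))) : Zq (p ^ (k+1))) = 0 := hmem
      have hzz : (x.2 : ZMod (p ^ (k + 1))) = 0 := hcast
      rw [ZMod.intCast_zmod_eq_zero_iff_dvd] at hzz
      have hdvd : (p:ℤ) ^ (k+1) ∣ x.2 := by exact_mod_cast hzz
      have h1 : (p:ℕ) ^ (k+1) ∣ x.2.natAbs := by
        have h0 := Int.natAbs_dvd_natAbs.mpr hdvd
        rwa [Int.natAbs_pow, Int.natAbs_natCast] at h0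
      have h2 : (p:ℕ) ^ (k+1) ≤ x.2.natAbs := Nat.le_of_dvd (Int.natAbs_pos.mpr hm) h1
      have h3 : x.2.natAbs < 2 ^ (k + 1) := lt_of_lt_of_le Nat.lt_two_pow_self (Nat.pow_le_pow_right (by norm_num) (by omega))
      have h4 : (2:ℕ) ^ (k+1) ≤ p ^ (k+1) := Nat.pow_le_pow_left hp _
      omega


-- ===================== chunk 5 : separation =====================

lemma dseq_fst (p j : ℕ) : (dseq p j).1 = if j % 2 = 1 then (1 : ZMod p) else 0 := by
  unfold dseq; split <;> rfl

lemma dseq_snd (p j : ℕ) :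
    (dseq p j).2 = if j % 2 = 1 then fseq p ((j + 1) / 2) else (p : ℤ) ^ (j / 2) := by
  unfold dseq; split <;> rfl

lemma sum_natAbs_le_Wt (lam : ℕ →₀ ℤ) {S : Finset ℕ} {T : ℕ} (hS : ∀ j ∈ S, j < T) :
    ∑ j ∈ S, (lam j).natAbs ≤ Wt lam T :=
  Finset.sum_le_sum_of_subset (fun j hj => Finset.mem_range.mpr (hS j hj))

lemma cfun_le_of {n₁ : ℕ} (h2 : 2 ≤ n₁) : cfun (2 * n₁ ^ 3) ≤ Nat.log 2 n₁ + 3 := by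
  set l := Nat.log 2 n₁ with hl
  have hn₁ : n₁ < 2 ^ (l + 1) := Nat.lt_pow_succ_log_self (by norm_num) n₁
  have hinner : Nat.log 2 (2 * n₁ ^ 3) ≤ 4 * l + 3 := by
    have h1 : 2 * n₁ ^ 3 ≤ n₁ ^ 4 := by
      calc 2 * n₁ ^ 3 ≤ n₁ * n₁ ^ 3 := Nat.mul_le_mul_right _ h2
      _ = n₁ ^ 4 := by ring
    have h2' : n₁ ^ 4 < 2 ^ (4 * l + 4) := by
      calc n₁ ^ 4 < (2 ^ (l + 1)) ^ 4 := Nat.pow_lt_pow_left hn₁ (by norm_num)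
      _ = 2 ^ (4 * l + 4) := by rw [← pow_mul]; ring_nf
    have : Nat.log 2 (2 * n₁ ^ 3) < 4 * l + 4 := by
      rw [Nat.log_lt_iff_lt_pow (by norm_num) (by positivity)]
      omega
    omega
  have houter : Nat.log 2 (Nat.log 2 (2 * n₁ ^ 3)) ≤ l + 3 := by
    rcases Nat.eq_zero_or_pos (Nat.log 2 (2 * n₁ ^ 3)) with h0 | h0
    · rw [h0]; simp
    · have hll : l < 2 ^ l := Nat.lt_two_pow_self (n := l)
      have harg : Nat.log 2 (2 * n₁ ^ 3) < 2 ^ (l + 4) := by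
        have : 4 * l + 3 < 2 ^ (l + 4) := by
          have : 2 ^ (l + 4) = 16 * 2 ^ l := by rw [pow_add]; ring
          omega
        omega
      have : Nat.log 2 (Nat.log 2 (2 * n₁ ^ 3)) < l + 4 := by
        rw [Nat.log_lt_iff_lt_pow (by norm_num) (by omega)]
        exact harg
      omega
  exact houter

lemma cube_ge {n₁ n' : ℕ} (h : n₁ + 1 ≤ n') : n₁ ^ 3 ≤ n' ^ 3 - n' ^ 2 := by
  have h1 : n' ^ 2 + n₁ ^ 3 ≤ n' ^ 3 := by
    have e1 : n' ^ 3 = n' ^ 2 * n' := by ring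
    have e2 : n' ^ 2 * (n₁ + 1) ≤ n' ^ 2 * n' := Nat.mul_le_mul_left _ h
    have e3 : n₁ ^ 2 ≤ n' ^ 2 := Nat.pow_le_pow_left (by omega) 2
    have e4 : n₁ ^ 3 = n₁ ^ 2 * n₁ := by ring
    have e5 : n₁ ^ 2 * n₁ ≤ n' ^ 2 * n₁ := Nat.mul_le_mul_right _ e3
    have e6 : n' ^ 2 * (n₁ + 1) = n' ^ 2 * n₁ + n' ^ 2 := by ring
    omega
  omega

set_option maxHeartbeats 2000000 in
/-- The separation lemma: nonzero torsion elements are not in `Vset p 12`. -/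
lemma sep (p : ℕ) (hp : 2 ≤ p) (a : ZMod p) (ha : a ≠ 0) :
    ((a, 0) : ZMod p × ℤ) ∉ Vset p 12 := by
  rintro ⟨lam, hW, hsum⟩
  rw [sumd_apply, Finsupp.sum] at hsum
  set O : Finset ℕ := lam.support.filter (fun j => j % 2 = 1) with hOdef
  set Ev : Finset ℕ := lam.support.filter (fun j => ¬ j % 2 = 1) with hEvdef
  -- first coordinate: O is nonempty
  have hfst : ∑ j ∈ lam.support, lam j • (dseq p j).1 = a := by
    have := congrArg Prod.fst hsum
    simpa [Prod.fst_sum] using this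
  have hOne : O.Nonempty := by
    rw [Finset.nonempty_iff_ne_empty]
    intro hO0
    apply ha
    rw [← hfst, ← Finset.sum_filter_add_sum_filter_not lam.support (fun j => j % 2 = 1)]
    rw [← hOdef, ← hEvdef, hO0]
    have : ∑ j ∈ Ev, lam j • (dseq p j).1 = 0 := by
      apply Finset.sum_eq_zero
      intro j hj
      have hj2 : ¬ j % 2 = 1 := (Finset.mem_filter.mp hj).2
      rw [dseq_fst, if_neg hj2, smul_zero]
    rw [this]
    simp
  -- second coordinate equation
  have hsnd : (∑ j ∈ O, lam j * fseq p ((j + 1) / 2))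
      + ∑ j ∈ Ev, lam j * (p : ℤ) ^ (j / 2) = 0 := by
    have h0 := congrArg Prod.snd hsum
    rw [Prod.snd_sum] at h0
    have h1 : ∑ j ∈ lam.support, (lam j • dseq p j).2 = 0 := h0
    rw [← Finset.sum_filter_add_sum_filter_not lam.support (fun j => j % 2 = 1)] at h1
    rw [← hOdef, ← hEvdef] at h1
    have hOeq : ∑ j ∈ O, (lam j • dseq p j).2 = ∑ j ∈ O, lam j * fseq p ((j + 1) / 2) := by
      apply Finset.sum_congr rfl
      intro j hj
      have hj2 : j % 2 = 1 := (Finset.mem_filter.mp hj).2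
      rw [Prod.smul_snd, dseq_snd, if_pos hj2, zsmul_eq_mul]
      norm_cast
    have hEeq : ∑ j ∈ Ev, (lam j • dseq p j).2 = ∑ j ∈ Ev, lam j * (p:ℤ) ^ (j / 2) := by
      apply Finset.sum_congr rfl
      intro j hj
      have hj2 : ¬ j % 2 = 1 := (Finset.mem_filter.mp hj).2
      rw [Prod.smul_snd, dseq_snd, if_neg hj2, zsmul_eq_mul]
      norm_cast
    rw [hOeq, hEeq] at h1
    exact h1
  -- the minimal odd index
  set o₁ : ℕ := O.min' hOne with ho₁def
  have ho₁O : o₁ ∈ O := Finset.min'_mem _ _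
  have ho₁supp : o₁ ∈ lam.support := (Finset.mem_filter.mp ho₁O).1
  have ho₁odd : o₁ % 2 = 1 := (Finset.mem_filter.mp ho₁O).2
  have hlamo₁ : lam o₁ ≠ 0 := Finsupp.mem_support_iff.mp ho₁supp
  set n₁ : ℕ := o₁ / 2 + 1 with hn₁def
  have ho₁val : o₁ = 2 * n₁ - 1 := by omega
  have ho₁n : (o₁ + 1) / 2 = n₁ := by omega
  -- support elements are large
  have hsupp_ge : ∀ j ∈ lam.support, 2 ^ 12 ≤ cfun (j + 1) := by
    intro j hj
    have h1 : 1 ≤ (lam j).natAbs := Int.natAbs_pos.mpr (Finsupp.mem_support_iff.mp hj)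
    have h2 : 1 ≤ Wt lam (j + 1) := by
      have := Finset.single_le_sum (f := fun i => (lam i).natAbs)
        (fun i _ => Nat.zero_le _) (Finset.mem_range.mpr (Nat.lt_succ_self j))
      exact le_trans h1 this
    calc (2:ℕ) ^ 12 = 1 * 2 ^ 12 := by ring
    _ ≤ Wt lam (j + 1) * 2 ^ 12 := Nat.mul_le_mul_right _ h2
    _ ≤ cfun (j + 1) := hW (j + 1)

  -- numerical bounds
  set l : ℕ := Nat.log 2 n₁ with hldef
  have hcO : 2 ^ 12 ≤ cfun (2 * n₁) := by
    have h1 := hsupp_ge o₁ ho₁supp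
    have h2 : o₁ + 1 = 2 * n₁ := by omega
    rwa [h2] at h1
  have hlbig : 6 ≤ l := by
    have hmul : Nat.log 2 (2 * n₁) = l + 1 := by
      rw [show 2 * n₁ = n₁ * 2 by ring]
      exact Nat.log_mul_base (by norm_num) (by omega)
    have hne : Nat.log 2 (2 * n₁) ≠ 0 := by omega
    have hlog1 : (2:ℕ) ^ (2 ^ 12) ≤ Nat.log 2 (2 * n₁) := by
      calc (2:ℕ) ^ (2 ^ 12) ≤ 2 ^ cfun (2 * n₁) := Nat.pow_le_pow_right (by norm_num) hcO
      _ = 2 ^ (Nat.log 2 (Nat.log 2 (2 * n₁))) := rfl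
      _ ≤ Nat.log 2 (2 * n₁) := Nat.pow_log_le_self 2 hne
    have h64 : (64:ℕ) ≤ 2 ^ (2 ^ 12 : ℕ) := by
      calc (64:ℕ) = 2 ^ 6 := by norm_num
      _ ≤ 2 ^ (2 ^ 12 : ℕ) := Nat.pow_le_pow_right (by norm_num) (by norm_num)
    omega
  have h2l : 2 ^ l ≤ n₁ := Nat.pow_log_le_self 2 (by omega)
  have h2n₁ : 2 ≤ n₁ := by
    have h26 : (2:ℕ) ^ 6 ≤ 2 ^ l := Nat.pow_le_pow_right (by norm_num) hlbig
    have : (64:ℕ) = 2 ^ 6 := by norm_num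
    omega
  have hmaster : 4 * l + 14 ≤ n₁ := le_trans (numeric_helper hlbig) h2l
  have hn₁l : n₁ < 2 ^ (l + 1) := Nat.lt_pow_succ_log_self (by norm_num) n₁
  set κ : ℕ := (lam o₁).natAbs with hκdef
  have hκ1 : 1 ≤ κ := Int.natAbs_pos.mpr hlamo₁
  have hcfun_big : cfun (2 * n₁ ^ 3) ≤ l + 3 := cfun_le_of h2n₁
  have hn₁cube : 2 * n₁ ≤ 2 * n₁ ^ 3 := by
    have := Nat.le_self_pow (by norm_num : (3:ℕ) ≠ 0) n₁
    omega
  have hκl : κ ≤ l + 3 := by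
    have h1 : κ ≤ Wt lam (2 * n₁) := by
      have h0 : (lam o₁).natAbs ≤ Wt lam (o₁ + 1) :=
        Finset.single_le_sum (f := fun i => (lam i).natAbs) (fun i _ => Nat.zero_le _)
          (Finset.mem_range.mpr (Nat.lt_succ_self o₁))
      have h2 : o₁ + 1 = 2 * n₁ := by omega
      rw [hκdef, ← h2]
      exact h0
    have h2 := hW (2 * n₁)
    have h3 : cfun (2 * n₁) ≤ cfun (2 * n₁ ^ 3) := cfun_mono hn₁cube
    have h4 : κ * 2 ^ 12 ≤ l + 3 := by
      calc κ * 2 ^ 12 ≤ Wt lam (2 * n₁) * 2 ^ 12 := Nat.mul_le_mul_right _ h1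
      _ ≤ cfun (2 * n₁) := h2
      _ ≤ l + 3 := le_trans h3 hcfun_big
    have : κ ≤ κ * 2 ^ 12 := Nat.le_mul_of_pos_right _ (by norm_num)
    omega
  set Θ : ℕ := n₁ ^ 3 with hΘdef
  set Eth : Finset ℕ := Ev.filter (fun j => j / 2 < Θ) with hEthdef
  set s : ℕ := ∑ j ∈ Eth, (lam j).natAbs with hsdef
  have hsl : s ≤ l + 3 := by
    have hsub : s ≤ Wt lam (2 * Θ) := by
      apply sum_natAbs_le_Wt
      intro j hj
      rw [hEthdef, Finset.mem_filter] at hj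
      have hje : ¬ j % 2 = 1 := (Finset.mem_filter.mp hj.1).2
      have := hj.2
      omega
    have h2 := hW (2 * Θ)
    have h4 : s * 2 ^ 12 ≤ l + 3 := by
      calc s * 2 ^ 12 ≤ Wt lam (2 * Θ) * 2 ^ 12 := Nat.mul_le_mul_right _ hsub
      _ ≤ cfun (2 * Θ) := h2
      _ ≤ l + 3 := hcfun_big
    have : s ≤ s * 2 ^ 12 := Nat.le_mul_of_pos_right _ (by norm_num)
    omega
  set hh : ℕ := s + κ + 2 with hhdef
  have hhn : hh < n₁ := by omega
  set v : ℕ := n₁ ^ 3 - n₁ ^ 2 with hvdef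
  have hsq : n₁ * n₁ = n₁ ^ 2 := by ring
  have hcube : n₁ ^ 2 * n₁ = n₁ ^ 3 := by ring
  have h23 : n₁ ^ 2 + n₁ ≤ n₁ ^ 3 := by nlinarith
  have hvlarge : n₁ ≤ v := by
    have h2sq : 2 * n₁ ≤ n₁ ^ 2 := by nlinarith
    omega
  have hhv : hh ≤ v := by omega
  set Gc : ℕ → ℕ := fun i => (v - hh) + i * n₁ with hGcdef
  have hGcle : ∀ i, i ≤ n₁ → Gc i ≤ Θ := by
    intro i hi
    have h1 : i * n₁ ≤ n₁ * n₁ := Nat.mul_le_mul_right _ hi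
    simp only [hGcdef]
    omega
  set Lsum : ℕ → ℤ := fun w => ∑ j ∈ Ev.filter (fun j => j / 2 < w), lam j * (p:ℤ) ^ (j / 2)
    with hLdef
  set Fi : ℕ → ℤ := fun w =>
    ∑ t ∈ (Finset.range (n₁ + 1)).filter (fun t => n₁ ^ 3 - t * n₁ < w),
      (p:ℤ) ^ (n₁ ^ 3 - t * n₁) with hFidef
  -- the divisibility relation
  have hdiv : ∀ w, w ≤ Θ → (p:ℤ) ^ w ∣ (Lsum w + lam o₁ * Fi w) := by
    intro w hw
    have hsplitO : ∑ j ∈ O, lam j * fseq p ((j + 1) / 2)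
        = lam o₁ * fseq p n₁ + ∑ j ∈ O.erase o₁, lam j * fseq p ((j + 1) / 2) := by
      rw [← Finset.add_sum_erase O _ ho₁O, ho₁n]
    have hsplitE : ∑ j ∈ Ev, lam j * (p:ℤ) ^ (j / 2)
        = Lsum w + ∑ j ∈ Ev.filter (fun j => ¬ j / 2 < w), lam j * (p:ℤ) ^ (j / 2) :=
      (Finset.sum_filter_add_sum_filter_not Ev _ _).symm
    have hsplitF : fseq p n₁ = Fi w
        + ∑ t ∈ (Finset.range (n₁ + 1)).filter (fun t => ¬ n₁ ^ 3 - t * n₁ < w),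
            (p:ℤ) ^ (n₁ ^ 3 - t * n₁) :=
      (Finset.sum_filter_add_sum_filter_not _ _ _).symm
    have hkey : Lsum w + lam o₁ * Fi w
        = -(lam o₁ * (∑ t ∈ (Finset.range (n₁ + 1)).filter (fun t => ¬ n₁ ^ 3 - t * n₁ < w),
              (p:ℤ) ^ (n₁ ^ 3 - t * n₁))
          + (∑ j ∈ O.erase o₁, lam j * fseq p ((j + 1) / 2))
          + (∑ j ∈ Ev.filter (fun j => ¬ j / 2 < w), lam j * (p:ℤ) ^ (j / 2))) := by
      have h0 := hsnd
      rw [hsplitO, hsplitE, hsplitF] at h0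
      linarith [h0]
    rw [hkey]
    rw [dvd_neg]
    apply dvd_add
    apply dvd_add
    · apply Dvd.dvd.mul_left
      apply Finset.dvd_sum
      intro t ht
      have := (Finset.mem_filter.mp ht).2
      exact pow_dvd_pow _ (by omega)
    · apply Finset.dvd_sum
      intro j hj
      have hjO : j ∈ O := Finset.mem_of_mem_erase hj
      have hjne : j ≠ o₁ := Finset.ne_of_mem_erase hj
      have hjodd : j % 2 = 1 := (Finset.mem_filter.mp hjO).2
      have hjge : o₁ ≤ j := Finset.min'_le O j hjO
      have hn' : n₁ + 1 ≤ (j + 1) / 2 := by omega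
      exact Dvd.dvd.mul_left (fseq_dvd' (le_trans hw (cube_ge hn'))) _
    · apply Finset.dvd_sum
      intro j hj
      have := (Finset.mem_filter.mp hj).2
      exact Dvd.dvd.mul_left (pow_dvd_pow _ (by omega)) _
  have hppos : (0:ℤ) < (p:ℤ) := by exact_mod_cast (by omega : 0 < p)
  have hp1 : (1:ℤ) ≤ (p:ℤ) := by exact_mod_cast (by omega : 1 ≤ p)
  -- lower bound on Fi
  have hB1 : ∀ i, i < n₁ → (p:ℤ) ^ (v + i * n₁) ≤ Fi (Gc (i + 1)) := by
    intro i hi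
    have hmm : (n₁ - i) * n₁ + i * n₁ = n₁ * n₁ := by
      rw [← Nat.add_mul]
      congr 1
      omega
    have himul : i * n₁ ≤ n₁ * n₁ := Nat.mul_le_mul_right _ (by omega)
    have hstep : (i + 1) * n₁ = i * n₁ + n₁ := by ring
    have hexp : n₁ ^ 3 - (n₁ - i) * n₁ = v + i * n₁ := by omega
    have ht : n₁ - i ∈ (Finset.range (n₁ + 1)).filter
        (fun t => n₁ ^ 3 - t * n₁ < Gc (i + 1)) := by
      rw [Finset.mem_filter, Finset.mem_range]
      refine ⟨by omega, ?_⟩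
      simp only [hGcdef]
      omega
    have := Finset.single_le_sum
      (f := fun t => (p:ℤ) ^ (n₁ ^ 3 - t * n₁)) (fun t _ => by positivity) ht
    calc (p:ℤ) ^ (v + i * n₁) = (p:ℤ) ^ (n₁ ^ 3 - (n₁ - i) * n₁) := by rw [hexp]
    _ ≤ Fi (Gc (i + 1)) := this
  -- upper bound on Fi
  have hB2 : ∀ i, i < n₁ → Fi (Gc (i + 1)) ≤ ((n₁:ℤ) + 1) * (p:ℤ) ^ (v + i * n₁) := by
    intro i hi
    have hstep : (i + 1) * n₁ = i * n₁ + n₁ := by ring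
    have hbound : ∀ t ∈ (Finset.range (n₁ + 1)).filter
        (fun t => n₁ ^ 3 - t * n₁ < Gc (i + 1)),
        (p:ℤ) ^ (n₁ ^ 3 - t * n₁) ≤ (p:ℤ) ^ (v + i * n₁) := by
      intro t ht
      rw [Finset.mem_filter, Finset.mem_range] at ht
      obtain ⟨ht1, ht2⟩ := ht
      apply pow_le_pow_right₀ hp1
      have htn : t ≤ n₁ := by omega
      have hmm : (n₁ - t) * n₁ + t * n₁ = n₁ * n₁ := by
        rw [← Nat.add_mul]; congr 1; omega
      have hexp : n₁ ^ 3 - t * n₁ = v + (n₁ - t) * n₁ := by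
        have : t * n₁ ≤ n₁ * n₁ := Nat.mul_le_mul_right _ htn
        omega
      rcases le_or_gt (n₁ - t) i with hcase | hcase
      · have : (n₁ - t) * n₁ ≤ i * n₁ := Nat.mul_le_mul_right _ hcase
        omega
      · exfalso
        have : (i + 1) * n₁ ≤ (n₁ - t) * n₁ := Nat.mul_le_mul_right _ (by omega)
        simp only [hGcdef] at ht2
        omega
    have hcard : ((Finset.range (n₁ + 1)).filter
        (fun t => n₁ ^ 3 - t * n₁ < Gc (i + 1))).card ≤ n₁ + 1 := by
      calc _ ≤ (Finset.range (n₁ + 1)).card := Finset.card_filter_le _ _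
      _ = n₁ + 1 := Finset.card_range _
    calc Fi (Gc (i + 1))
        ≤ ∑ _t ∈ (Finset.range (n₁ + 1)).filter
            (fun t => n₁ ^ 3 - t * n₁ < Gc (i + 1)), (p:ℤ) ^ (v + i * n₁) :=
          Finset.sum_le_sum hbound
    _ = (((Finset.range (n₁ + 1)).filter
            (fun t => n₁ ^ 3 - t * n₁ < Gc (i + 1))).card : ℤ) * (p:ℤ) ^ (v + i * n₁) := by
          rw [Finset.sum_const, nsmul_eq_mul]
    _ ≤ ((n₁:ℤ) + 1) * (p:ℤ) ^ (v + i * n₁) := by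
          apply mul_le_mul_of_nonneg_right _ (by positivity)
          exact_mod_cast hcard
  -- the key size estimate
  have hB3 : 2 * κ * (n₁ + 1) < p ^ (n₁ - hh) := by
    have e1 : l + 1 ≤ 2 ^ l := Nat.lt_two_pow_self (n := l)
    have e2 : n₁ + 1 ≤ 2 ^ (l + 1) := hn₁l
    have e4 : 2 * l + 6 < 2 ^ (l + 3) := by
      have h8 : 2 ^ (l + 3) = 8 * 2 ^ l := by rw [pow_add]; ring
      omega
    have e5 : 2 * κ * (n₁ + 1) < 2 ^ (l + 3) * 2 ^ (l + 1) := by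
      calc 2 * κ * (n₁ + 1) ≤ (2 * l + 6) * 2 ^ (l + 1) := Nat.mul_le_mul (by omega) e2
      _ < 2 ^ (l + 3) * 2 ^ (l + 1) := by
        have hpos : 0 < 2 ^ (l + 1) := by positivity
        exact (Nat.mul_lt_mul_right hpos).mpr e4
    have e6 : 2 ^ (l + 3) * 2 ^ (l + 1) = 2 ^ (2 * l + 4) := by
      rw [← pow_add]; ring_nf
    have e7 : 2 * l + 4 ≤ n₁ - hh := by omega
    calc 2 * κ * (n₁ + 1) < 2 ^ (2 * l + 4) := by omega
    _ ≤ 2 ^ (n₁ - hh) := Nat.pow_le_pow_right (by norm_num) e7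
    _ ≤ p ^ (n₁ - hh) := Nat.pow_le_pow_left hp _
  -- per-window existence of an even support element
  have hB4 : ∀ i, i < n₁ → ∃ j ∈ Ev, Gc i ≤ j / 2 ∧ j / 2 < Gc (i + 1) := by
    intro i hi
    by_contra hnone
    push_neg at hnone
    have hGcmono : Gc i ≤ Gc (i + 1) := by
      simp only [hGcdef]
      have : i * n₁ ≤ (i + 1) * n₁ := Nat.mul_le_mul_right _ (by omega)
      omega
    have hsets : Ev.filter (fun j => j / 2 < Gc (i + 1)) = Ev.filter (fun j => j / 2 < Gc i) := by
      ext j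
      simp only [Finset.mem_filter]
      constructor
      · rintro ⟨hj, hlt⟩
        refine ⟨hj, ?_⟩
        by_contra hge
        push_neg at hge
        exact absurd hlt (not_lt.mpr (hnone j hj hge))
      · rintro ⟨hj, hlt⟩
        exact ⟨hj, lt_of_lt_of_le hlt hGcmono⟩
    have hLeq : Lsum (Gc (i + 1)) = Lsum (Gc i) := by
      simp only [hLdef]
      rw [hsets]
    have hdvd := hdiv (Gc (i + 1)) (hGcle (i + 1) (by omega))
    have hFi1 := hB1 i hi
    have hFi2 := hB2 i hi
    have habs : |lam o₁| = (κ:ℤ) := by rw [hκdef, Int.abs_eq_natAbs]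
    have hFipos : (0:ℤ) < Fi (Gc (i + 1)) := lt_of_lt_of_le (by positivity) hFi1
    have hprod_lb : (p:ℤ) ^ (v + i * n₁) ≤ |lam o₁ * Fi (Gc (i + 1))| := by
      rw [abs_mul, abs_of_pos hFipos]
      calc (p:ℤ) ^ (v + i * n₁) ≤ Fi (Gc (i + 1)) := hFi1
      _ = 1 * Fi (Gc (i + 1)) := (one_mul _).symm
      _ ≤ |lam o₁| * Fi (Gc (i + 1)) :=
        mul_le_mul_of_nonneg_right (Int.one_le_abs hlamo₁) (le_of_lt hFipos)
    have hexpGc : (n₁ - hh) + (v + i * n₁) = Gc (i + 1) := by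
      simp only [hGcdef]
      have hstep : (i + 1) * n₁ = i * n₁ + n₁ := by ring
      omega
    have hprod_ub : 2 * |lam o₁ * Fi (Gc (i + 1))| < (p:ℤ) ^ (Gc (i + 1)) := by
      rw [abs_mul, abs_of_pos hFipos, habs]
      calc 2 * ((κ:ℤ) * Fi (Gc (i + 1)))
          ≤ 2 * ((κ:ℤ) * (((n₁:ℤ) + 1) * (p:ℤ) ^ (v + i * n₁))) := by
            apply mul_le_mul_of_nonneg_left _ (by norm_num)
            exact mul_le_mul_of_nonneg_left hFi2 (by positivity)
      _ = ((2 * κ * (n₁ + 1) : ℕ) : ℤ) * (p:ℤ) ^ (v + i * n₁) := by push_cast; ring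
      _ < ((p ^ (n₁ - hh) : ℕ) : ℤ) * (p:ℤ) ^ (v + i * n₁) := by
            apply mul_lt_mul_of_pos_right _ (by positivity)
            exact_mod_cast hB3
      _ = (p:ℤ) ^ (Gc (i + 1)) := by
            push_cast
            rw [← pow_add, hexpGc]
    have hlower : (p:ℤ) ^ (v + i * n₁) ≤ |Lsum (Gc (i + 1))| := by
      rcases eq_or_ne (Lsum (Gc (i + 1)) + lam o₁ * Fi (Gc (i + 1))) 0 with hX0 | hX0
      · have hLeqneg : Lsum (Gc (i + 1)) = -(lam o₁ * Fi (Gc (i + 1))) := by linarith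
        rw [hLeqneg, abs_neg]
        exact hprod_lb
      · have h1 : (p:ℤ) ^ (Gc (i + 1)) ≤ |Lsum (Gc (i + 1)) + lam o₁ * Fi (Gc (i + 1))| :=
          Int.le_of_dvd (abs_pos.mpr hX0) ((dvd_abs _ _).mpr hdvd)
      -- |Lsum| ≥ |X| - |prod|
        have h2 : |Lsum (Gc (i + 1)) + lam o₁ * Fi (Gc (i + 1))|
            ≤ |Lsum (Gc (i + 1))| + |lam o₁ * Fi (Gc (i + 1))| := abs_add_le _ _
        linarith [hprod_lb, hprod_ub]
    have hGc1 : 1 ≤ Gc i := by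
      simp only [hGcdef]
      omega
    have hsum_le : (∑ j ∈ Ev.filter (fun j => j / 2 < Gc i), ((lam j).natAbs : ℤ)) ≤ (s:ℤ) := by
      have hsubset : Ev.filter (fun j => j / 2 < Gc i) ⊆ Eth := by
        intro j hj
        rw [Finset.mem_filter] at hj
        rw [hEthdef, Finset.mem_filter]
        exact ⟨hj.1, lt_of_lt_of_le hj.2 (le_trans (hGcle i (by omega)) le_rfl)⟩
      have : (∑ j ∈ Ev.filter (fun j => j / 2 < Gc i), (lam j).natAbs) ≤ s := by
        rw [hsdef]
        exact Finset.sum_le_sum_of_subset hsubset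
      exact_mod_cast this
    have hupper : |Lsum (Gc i)| ≤ (s:ℤ) * (p:ℤ) ^ (Gc i - 1) := by
      calc |Lsum (Gc i)| ≤ ∑ j ∈ Ev.filter (fun j => j / 2 < Gc i), |lam j * (p:ℤ) ^ (j / 2)| :=
        Finset.abs_sum_le_sum_abs _ _
      _ ≤ ∑ j ∈ Ev.filter (fun j => j / 2 < Gc i), ((lam j).natAbs : ℤ) * (p:ℤ) ^ (Gc i - 1) := by
          apply Finset.sum_le_sum
          intro j hj
          rw [Finset.mem_filter] at hj
          rw [abs_mul, Int.abs_eq_natAbs, abs_pow, abs_of_pos hppos]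
          apply mul_le_mul_of_nonneg_left _ (by positivity)
          exact pow_le_pow_right₀ hp1 (by omega)
      _ = (∑ j ∈ Ev.filter (fun j => j / 2 < Gc i), ((lam j).natAbs : ℤ)) * (p:ℤ) ^ (Gc i - 1) := by
          rw [Finset.sum_mul]
      _ ≤ (s:ℤ) * (p:ℤ) ^ (Gc i - 1) :=
          mul_le_mul_of_nonneg_right hsum_le (by positivity)
    have hcomb : (p:ℤ) ^ (v + i * n₁) ≤ (s:ℤ) * (p:ℤ) ^ (Gc i - 1) := by
      rw [← hLeq] at hupper
      exact le_trans hlower hupper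
    have hfinal : (p:ℕ) ^ (hh + 1) ≤ s := by
      have hexp2 : v + i * n₁ = (hh + 1) + (Gc i - 1) := by
        simp only [hGcdef]
        omega
      have hsplit : (p:ℤ) ^ (v + i * n₁) = (p:ℤ) ^ (hh + 1) * (p:ℤ) ^ (Gc i - 1) := by
        rw [hexp2, pow_add]
      rw [hsplit] at hcomb
      have := le_of_mul_le_mul_right hcomb (by positivity : (0:ℤ) < (p:ℤ) ^ (Gc i - 1))
      exact_mod_cast this
    have hcontra : s < p ^ (hh + 1) := by
      calc s < 2 ^ s := Nat.lt_two_pow_self (n := s)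
      _ ≤ 2 ^ (hh + 1) := Nat.pow_le_pow_right (by norm_num) (by omega)
      _ ≤ p ^ (hh + 1) := Nat.pow_le_pow_left hp _
    omega
  -- counting: each window contributes a distinct element of Eth
  classical
  have hGcStrict : ∀ x y, x < y → Gc (x + 1) ≤ Gc y := by
    intro x y hxy
    simp only [hGcdef]
    have : (x + 1) * n₁ ≤ y * n₁ := Nat.mul_le_mul_right _ (by omega)
    omega
  set f : ℕ → ℕ := fun i => if hi : i < n₁ then (hB4 i hi).choose else 0 with hfdef
  have hfspec : ∀ i, i < n₁ → f i ∈ Ev ∧ Gc i ≤ f i / 2 ∧ f i / 2 < Gc (i + 1) := by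
    intro i hi
    have hspec := (hB4 i hi).choose_spec
    simp only [hfdef, dif_pos hi]
    exact ⟨hspec.1, hspec.2.1, hspec.2.2⟩
  have hcard : (Finset.range n₁).card ≤ Eth.card := by
    apply Finset.card_le_card_of_injOn f
    · intro i hi
      rw [Finset.mem_coe, Finset.mem_range] at hi
      obtain ⟨h1, h2, h3⟩ := hfspec i hi
      rw [Finset.mem_coe, hEthdef, Finset.mem_filter]
      refine ⟨h1, ?_⟩
      calc f i / 2 < Gc (i + 1) := h3
      _ ≤ Θ := hGcle (i + 1) (by omega)
    · intro x hx y hy hxy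
      rw [Finset.coe_range, Set.mem_Iio] at hx hy
      obtain ⟨_, hx2, hx3⟩ := hfspec x hx
      obtain ⟨_, hy2, hy3⟩ := hfspec y hy
      by_contra hne
      rcases Nat.lt_or_ge x y with h | h
      · have := hGcStrict x y h
        rw [hxy] at hx3
        omega
      · have hyx : y < x := by omega
        have := hGcStrict y x hyx
        rw [hxy] at hx2
        omega
  have hcount : n₁ ≤ s := by
    have h1 : Eth.card ≤ s := by
      rw [hsdef]
      calc Eth.card = ∑ _j ∈ Eth, 1 := by simp
      _ ≤ ∑ j ∈ Eth, (lam j).natAbs := by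
          apply Finset.sum_le_sum
          intro j hj
          have hjsupp : j ∈ lam.support := (Finset.mem_filter.mp ((Finset.mem_filter.mp hj).1)).1
          exact Int.natAbs_pos.mpr (Finsupp.mem_support_iff.mp hjsupp)
    calc n₁ = (Finset.range n₁).card := (Finset.card_range _).symm
    _ ≤ Eth.card := hcard
    _ ≤ s := h1
  omega



/-- The basic character detecting divisibility by `p^(k+1)` in the second coordinate. -/
noncomputable def chiHom (p k : ℕ) : (ZMod p × ℤ) →+ AddCircle (1 : ℝ) where
  toFun x := (((x.2 : ℝ) / (p : ℝ) ^ (k + 1) : ℝ) : AddCircle (1 : ℝ))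
  map_zero' := by norm_num
  map_add' x y := by
    show ((((x.2 + y.2 : ℤ) : ℝ) / (p:ℝ) ^ (k+1) : ℝ) : AddCircle (1:ℝ)) = _
    push_cast
    rw [add_div, AddCircle.coe_add]

lemma chiHom_eq_zero_iff (p k : ℕ) (hp : 2 ≤ p) (x : ZMod p × ℤ) :
    chiHom p k x = 0 ↔ (p : ℤ) ^ (k + 1) ∣ x.2 := by
  have hq : ((p : ℝ)) ^ (k + 1) ≠ 0 := by positivity
  show ((((x.2 : ℝ) / (p:ℝ) ^ (k+1) : ℝ) : AddCircle (1:ℝ)) = 0) ↔ _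
  rw [AddCircle.coe_eq_zero_iff]
  constructor
  · rintro ⟨n, hn⟩
    refine ⟨n, ?_⟩
    have : (n : ℝ) * (p:ℝ) ^ (k+1) = (x.2 : ℝ) := by
      have : (n : ℝ) = (x.2 : ℝ) / (p:ℝ) ^ (k+1) := by
        simpa using hn
      rw [this]; field_simp
    exact_mod_cast by
      have : ((x.2 : ℝ)) = ((((p:ℤ) ^ (k+1) * n : ℤ)) : ℝ) := by push_cast; linarith [this]
      exact_mod_cast this
  · rintro ⟨t, ht⟩
    refine ⟨t, ?_⟩
    rw [ht, zsmul_eq_mul, mul_one]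
    push_cast
    field_simp

lemma chiHom_continuous (p k : ℕ) (hp : 2 ≤ p) :
    @Continuous _ _ (tau p) _ (chiHom p k) := by
  haveI : NeZero (p ^ (k + 1)) := ⟨pow_ne_zero _ (by omega)⟩
  set q : ℕ := p ^ (k + 1) with hqdef
  -- factor through the discrete component
  have hfact : (chiHom p k : ZMod p × ℤ → AddCircle (1:ℝ)) =
      (fun z : Zq q => ((((z : ZMod q).val : ℝ) / (q : ℝ) : ℝ) : AddCircle (1:ℝ)))
        ∘ (fun y : Mgrp p => y.2 k) ∘ (phi p) := by
    funext x
    have hcomp : ((fun z : Zq q => ((((z : ZMod q).val : ℝ) / (q : ℝ) : ℝ) : AddCircle (1:ℝ)))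
        ∘ (fun y : Mgrp p => y.2 k) ∘ (phi p)) x
        = (((((x.2 : ZMod q)).val : ℝ) / (q:ℝ) : ℝ) : AddCircle (1:ℝ)) := by
      rw [Function.comp_apply, Function.comp_apply, phi_apply]
    rw [hcomp]
    show (((x.2 : ℝ) / (p:ℝ) ^ (k+1) : ℝ) : AddCircle (1:ℝ))
      = (((((x.2 : ZMod q)).val : ℝ) / (q:ℝ) : ℝ) : AddCircle (1:ℝ))
    · have hval : (((x.2 : ZMod q)).val : ℤ) = x.2 % (q : ℤ) := by
        rw [ZMod.val_intCast]
      have hmod : (x.2 % (q:ℤ)) = x.2 - (q:ℤ) * (x.2 / (q:ℤ)) := Int.emod_def x.2 (q:ℤ)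
      set t : ℤ := x.2 / (q : ℤ) with ht
      have hre : ((((x.2 : ZMod q)).val : ℝ)) / (q:ℝ) = (x.2 : ℝ) / (q:ℝ) - (t : ℝ) := by
        have h1 : ((((x.2 : ZMod q)).val : ℤ) : ℝ) = (x.2 : ℝ) - (q:ℝ) * (t:ℝ) := by
          rw [hval, hmod]; push_cast; ring
        have hq0 : (q:ℝ) ≠ 0 := by positivity
        rw [show ((((x.2 : ZMod q)).val : ℝ)) = ((((x.2 : ZMod q)).val : ℤ) : ℝ) by push_cast; rfl]
        rw [h1]; field_simp
      rw [hre]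
      have hq' : ((q:ℕ) : ℝ) = (p:ℝ) ^ (k+1) := by rw [hqdef]; push_cast; ring
      rw [hq']
      rw [sub_eq_add_neg, AddCircle.coe_add]
      have : (((-t : ℤ) : ℝ) : AddCircle (1:ℝ)) = 0 := by
        rw [AddCircle.coe_eq_zero_iff]
        exact ⟨-t, by simp⟩
      rw [show ((-(t:ℝ)) : ℝ) = ((-t : ℤ) : ℝ) by push_cast; ring, this, add_zero]
  rw [hfact]
  have c1 : Continuous (fun z : Zq q => ((((z : ZMod q).val : ℝ) / (q : ℝ) : ℝ) : AddCircle (1:ℝ))) :=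
    continuous_of_discreteTopology
  have c2 : Continuous (fun y : Mgrp p => y.2 k) := (continuous_apply k).comp continuous_snd
  have c3 : @Continuous _ _ (tau p) _ (phi p) := continuous_induced_dom
  exact @Continuous.comp _ _ _ (tau p) _ _ _ _ c1
    (@Continuous.comp _ _ _ (tau p) _ _ _ _ c2 c3)

/-- The packaged continuous character. -/
noncomputable def chiC (p k : ℕ) (hp : 2 ≤ p) :
    @ContinuousAddMonoidHom (ZMod p × ℤ) (AddCircle (1:ℝ)) _ _ (tau p) _ := by
  letI := tau p
  exact { toAddMonoidHom := chiHom p k, continuous_toFun := chiHom_continuous p k hp }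

lemma radical_eq (p : ℕ) (hp : p.Prime) :
    @vonNeumannRadical (ZMod p × ℤ) _ (tau p) =
      (⊤ : AddSubgroup (ZMod p)).prod (⊥ : AddSubgroup ℤ) := by
  have hp2 : 2 ≤ p := hp.two_le
  haveI : NeZero p := ⟨by omega⟩
  letI := tau p
  haveI := tau_addgroup p
  ext x
  rw [vonNeumannRadical, AddSubgroup.mem_iInf]
  simp only [AddSubgroup.mem_prod, AddSubgroup.mem_top, true_and, AddSubgroup.mem_bot]
  constructor
  · intro h
    by_contra hm
    set k := x.2.natAbs with hk
    have hker := h (chiC p k hp2)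
    rw [AddMonoidHom.mem_ker] at hker
    have h0 : chiHom p k x = 0 := hker
    rw [chiHom_eq_zero_iff p k hp2] at h0
    have h1 : (p:ℕ) ^ (k+1) ∣ x.2.natAbs := by
      have h0' := Int.natAbs_dvd_natAbs.mpr h0
      rwa [Int.natAbs_pow, Int.natAbs_natCast] at h0'
    have h2 : (p:ℕ) ^ (k+1) ≤ x.2.natAbs := Nat.le_of_dvd (Int.natAbs_pos.mpr hm) h1
    have h3 : x.2.natAbs < 2 ^ (k + 1) :=
      lt_of_lt_of_le Nat.lt_two_pow_self (Nat.pow_le_pow_right (by norm_num) (by omega))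
    have h4 : (2:ℕ) ^ (k+1) ≤ p ^ (k+1) := Nat.pow_le_pow_left hp2 _
    omega
  · intro hx2 χ
    rw [AddMonoidHom.mem_ker]
    have hbr : ∀ y : ZMod p × ℤ, χ.toAddMonoidHom y = χ y := fun y => rfl
    rw [hbr]
    -- χ (dseq p n) → 0
    have hd : Filter.Tendsto (fun n => χ (dseq p n)) Filter.atTop (nhds 0) := by
      have hcont : Continuous χ := χ.continuous_toFun
      have := (hcont.tendsto' 0 0 (map_zero χ)).comp (tendsto_dseq p hp2)
      exact this
    set b : AddCircle (1:ℝ) := χ (0, 1) with hb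
    -- even terms
    have heventwo : ∀ n : ℕ, χ (dseq p (2 * n)) = (p:ℤ) ^ n • b := by
      intro n
      have hdval : dseq p (2*n) = ((0 : ZMod p), (p:ℤ) ^ n) := by
        have h2 : 2 * n / 2 = n := by omega
        unfold dseq
        rw [if_neg (by omega), h2]
      rw [hdval]
      have : ((0 : ZMod p), (p:ℤ) ^ n) = (p:ℤ) ^ n • ((0, 1) : ZMod p × ℤ) := by
        refine Prod.ext ?_ ?_
        · simp
        · show (p:ℤ)^n = (p:ℤ)^n • (1:ℤ); simp
      rw [this, map_zsmul]
  -- pattern continues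
    have he : Filter.Tendsto (fun n => (p:ℤ) ^ n • b) Filter.atTop (nhds 0) := by
      have h2 : Filter.Tendsto (fun n : ℕ => 2 * n) Filter.atTop Filter.atTop :=
        Filter.tendsto_atTop_atTop.mpr fun c => ⟨c, fun a ha => by omega⟩
      exact Filter.Tendsto.congr (fun n => heventwo n) (hd.comp h2)
    obtain ⟨k, hk⟩ := addCircle_torsion hp2 b he
    -- odd terms
    have hoddval : ∀ n : ℕ, χ (dseq p (2 * n + 1)) = χ (1, 0) + fseq p (n+1) • b := by
      intro n
      have hdval : dseq p (2*n+1) = ((1 : ZMod p), fseq p (n+1)) := by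
        have h2 : (2 * n + 1 + 1) / 2 = n + 1 := by omega
        unfold dseq
        rw [if_pos (by omega), h2]
      rw [hdval]
      have : ((1 : ZMod p), fseq p (n+1)) = ((1,0) : ZMod p × ℤ) + fseq p (n+1) • ((0,1) : ZMod p × ℤ) := by
        refine Prod.ext ?_ ?_
        · simp
        · show fseq p (n+1) = 0 + fseq p (n+1) • (1:ℤ); simp
      rw [this, map_add, map_zsmul]
    have ho : Filter.Tendsto (fun n => χ (dseq p (2 * n + 1))) Filter.atTop (nhds 0) := by
      have h2 : Filter.Tendsto (fun n : ℕ => 2 * n + 1) Filter.atTop Filter.atTop :=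
        Filter.tendsto_atTop_atTop.mpr fun c => ⟨c, fun a ha => by omega⟩
      exact hd.comp h2
    have heq : ∀ᶠ n in Filter.atTop, χ (dseq p (2 * n + 1)) = χ ((1,0) : ZMod p × ℤ) := by
      rw [Filter.eventually_atTop]
      refine ⟨k, fun n hn => ?_⟩
      rw [hoddval n]
      obtain ⟨t, ht⟩ := fseq_dvd (p := p) (g := k) (n := n + 1) (by omega)
      rw [ht, mul_comm, mul_smul, hk, smul_zero, add_zero]
    have hconst : Filter.Tendsto (fun _ : ℕ => χ ((1,0) : ZMod p × ℤ)) Filter.atTop (nhds 0) :=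
      ho.congr' heq
    have h10 : χ ((1,0) : ZMod p × ℤ) = 0 :=
      tendsto_nhds_unique tendsto_const_nhds hconst
    -- conclude
    have hxval : x = x.1.val • ((1, 0) : ZMod p × ℤ) := by
      refine Prod.ext ?_ ?_
      · show x.1 = x.1.val • (1 : ZMod p)
        rw [nsmul_eq_mul, mul_one]
        exact (ZMod.natCast_rightInverse x.1).symm
      · show x.2 = x.1.val • (0:ℤ)
        rw [smul_zero, hx2]
    rw [hxval, map_nsmul, h10, smul_zero]


end AMAP

/-- There is a Hausdorff group topology `τ` on `(ℤ/pℤ) × ℤ` in which `d n → 0` and whose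
von Neumann radical is `(ℤ/pℤ) × {0}`; in particular it is almost maximally
almost-periodic. -/
theorem statement7 (p : ℕ) (hp : p.Prime) :
    ∃ τ : TopologicalSpace (ZMod p × ℤ), @IsTopologicalAddGroup (ZMod p × ℤ) τ _ ∧
      @T2Space (ZMod p × ℤ) τ ∧
      Filter.Tendsto (dseq p) Filter.atTop (@nhds (ZMod p × ℤ) τ 0) ∧
      @vonNeumannRadical (ZMod p × ℤ) _ τ =
        (⊤ : AddSubgroup (ZMod p)).prod (⊥ : AddSubgroup ℤ) := by
  have hp2 : 2 ≤ p := hp.two_le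
  exact ⟨AMAP.tau p, AMAP.tau_addgroup p,
    AMAP.tau_t2 p hp2 (fun a ha => AMAP.sep p hp2 a ha),
    AMAP.tendsto_dseq p hp2, AMAP.radical_eq p hp⟩
end

section
/- Let p be a prime and f_n = Σ_{i=0}^{n} p^{n³ − i·n} for n ≥ 1. Let ι : ℤ/pℤ → ℝ/ℤ be the embedding sending the class of k to k/p (mod 1). Then for ω ∈ ℤ/pℤ and x in the circle group 𝕋 = ℝ/ℤ, the two conditions (i) p^n • x → 0 in 𝕋 as n → ∞ and (ii) ι(ω) + f_n • x → 0 in 𝕋 as n → ∞ hold simultaneously if and only if ω = 0 and x is a p-power torsion element of 𝕋 (i.e., there exists k ≥ 0 with p^k • x = 0). In other words, the subgroup of (ℤ/pℤ) × 𝕋 characterized by the sequence d (with d_{2n−1} = (1, f_n), d_{2n} = (0, p^n)) is {0} × ℤ(p^∞). -/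
/-- The embedding `ℤ/pℤ → ℝ/ℤ` sending the class of `k` to `k/p (mod 1)`. -/
noncomputable def iotaZMod (p : ℕ) (ω : ZMod p) : AddCircle (1 : ℝ) :=
  (((ω.val : ℝ) / p : ℝ) : AddCircle (1 : ℝ))

lemma norm_smul_of_small (p : ℕ) (hp2 : 2 ≤ p) (y : AddCircle (1 : ℝ))
    (h : ‖y‖ ≤ 1 / (2 * p)) : ‖(p : ℤ) • y‖ = p * ‖y‖ := by
  induction y using QuotientAddGroup.induction_on with
  | H t =>
    set r : ℝ := t - round t with hr
    have hyr : (t : AddCircle (1 : ℝ)) = (r : AddCircle (1 : ℝ)) := by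
      rw [hr]
      have : ((round t : ℝ) : AddCircle (1 : ℝ)) = 0 := by
        rw [AddCircle.coe_eq_zero_iff]
        exact ⟨round t, by simp⟩
      rw [sub_eq_add_neg, AddCircle.coe_add, AddCircle.coe_neg, this]
      simp
    have hrabs : |r| ≤ 1 / 2 := by simpa [hr] using abs_sub_round t
    have hnorm : ‖(t : AddCircle (1 : ℝ))‖ = |r| := by
      rw [hyr, AddCircle.norm_coe_eq_abs_iff 1 one_ne_zero]
      simpa using hrabs
    have hp0 : (0:ℝ) < p := by positivity
    have hsmall : |r| ≤ 1 / (2 * p) := hnorm ▸ h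
    have hcast : ((p : ℤ) • r : ℝ) = (p : ℝ) * r := by
      rw [zsmul_eq_mul]; push_cast; ring
    have key : ‖(p : ℤ) • (t : AddCircle (1 : ℝ))‖ = |(p : ℝ) * r| := by
      rw [hyr, ← AddCircle.coe_zsmul, hcast,
        AddCircle.norm_coe_eq_abs_iff 1 one_ne_zero]
      rw [abs_mul, abs_of_pos hp0]
      calc (p : ℝ) * |r| ≤ (p : ℝ) * (1 / (2 * p)) :=
            mul_le_mul_of_nonneg_left hsmall (le_of_lt hp0)
        _ = 1 / 2 := by field_simp
        _ ≤ |(1:ℝ)| / 2 := by norm_num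
    rw [key, hnorm, abs_mul, abs_of_pos hp0]

lemma torsion_of_tendsto (p : ℕ) (hp : p.Prime) (x : AddCircle (1 : ℝ))
    (h : Filter.Tendsto (fun n : ℕ => (p : ℤ) ^ n • x) Filter.atTop (nhds 0)) :
    ∃ k : ℕ, (p : ℤ) ^ k • x = 0 := by
  by_contra hc
  push_neg at hc
  have hp2 : 2 ≤ p := hp.two_le
  have hp1 : (1:ℝ) < p := by exact_mod_cast hp.one_lt
  have hp0 : (0:ℝ) < p := by positivity
  have hε : (0:ℝ) < 1 / (2 * p) := by positivity
  rw [NormedAddCommGroup.tendsto_nhds_zero] at h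
  obtain ⟨N, hN⟩ := (h _ hε).exists_forall_of_atTop
  -- for all j, ‖p^(N+j) • x‖ = p^j * ‖p^N • x‖
  have grow : ∀ j : ℕ, ‖(p : ℤ) ^ (N + j) • x‖ = (p : ℝ) ^ j * ‖(p : ℤ) ^ N • x‖ := by
    intro j
    induction j with
    | zero => simp
    | succ j ih =>
      have hle : ‖(p : ℤ) ^ (N + j) • x‖ ≤ 1 / (2 * p) :=
        le_of_lt (hN (N + j) (Nat.le_add_right _ _))
      have : (p : ℤ) ^ (N + (j + 1)) • x = (p : ℤ) • ((p : ℤ) ^ (N + j) • x) := by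
        rw [← mul_smul, ← pow_succ']
        ring_nf
      rw [this, norm_smul_of_small p hp2 _ hle, ih, pow_succ]
      ring
  have hposN : 0 < ‖(p : ℤ) ^ N • x‖ := by
    rw [norm_pos_iff]
    exact hc N
  obtain ⟨j, hj⟩ := pow_unbounded_of_one_lt ((1 / (2 * p)) / ‖(p : ℤ) ^ N • x‖) hp1
  have h1 : ‖(p : ℤ) ^ (N + j) • x‖ < 1 / (2 * p) := hN (N + j) (Nat.le_add_right _ _)
  rw [grow j] at h1
  have : (1 / (2 * ↑p)) / ‖(p : ℤ) ^ N • x‖ < (p:ℝ) ^ j := hj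
  have := (div_lt_iff₀ hposN).mp this
  linarith

lemma smul_pow_eq_zero_of_le {p k m : ℕ} (x : AddCircle (1 : ℝ))
    (hx : (p : ℤ) ^ k • x = 0) (hkm : k ≤ m) : (p : ℤ) ^ m • x = 0 := by
  obtain ⟨j, rfl⟩ := Nat.exists_eq_add_of_le hkm
  rw [pow_add, mul_comm, mul_smul, hx, smul_zero]

lemma fseq_smul_eq_zero {p k : ℕ} (x : AddCircle (1 : ℝ))
    (hx : (p : ℤ) ^ k • x = 0) {n : ℕ} (hn : k + 1 ≤ n) : fseq p n • x = 0 := by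
  rw [fseq, Finset.sum_smul]
  refine Finset.sum_eq_zero fun i hi => ?_
  rw [Finset.mem_range] at hi
  refine smul_pow_eq_zero_of_le x hx ?_
  have hin : i ≤ n := Nat.lt_succ_iff.mp hi
  have h1 : i * n ≤ n * n := Nat.mul_le_mul_right n hin
  have hn1 : 1 ≤ n * n := Nat.one_le_iff_ne_zero.mpr (Nat.mul_ne_zero (by omega) (by omega))
  have h2 : k + n * n ≤ n ^ 3 := by
    calc k + n * n ≤ n * n * k + n * n := by
          have : k ≤ n * n * k := Nat.le_mul_of_pos_left k (by omega)
          omega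
      _ = n * n * (k + 1) := by ring
      _ ≤ n * n * n := Nat.mul_le_mul_left _ hn
      _ = n ^ 3 := by ring
  omega

lemma iota_eq_zero_iff (p : ℕ) (hp : p.Prime) (ω : ZMod p) :
    iotaZMod p ω = 0 ↔ ω = 0 := by
  haveI : NeZero p := ⟨hp.ne_zero⟩
  have hp0 : (0:ℝ) < p := by exact_mod_cast hp.pos
  constructor
  · intro h
    rw [iotaZMod, AddCircle.coe_eq_zero_iff_of_mem_Ico
      (by constructor
          · positivity
          · rw [div_lt_one hp0]
            exact_mod_cast ZMod.val_lt ω)] at h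
    rw [div_eq_zero_iff] at h
    rcases h with h | h
    · exact (ZMod.val_eq_zero ω).mp (Nat.cast_eq_zero.mp h)
    · exact absurd h (ne_of_gt hp0)
  · rintro rfl
    simp [iotaZMod]

/-- For `ω ∈ ℤ/pℤ` and `x ∈ 𝕋 = ℝ/ℤ`: `p^n • x → 0` and `ι(ω) + f p n • x → 0` hold
simultaneously iff `ω = 0` and `x` is `p`-power torsion.  That is, the subgroup of
`(ℤ/pℤ) × 𝕋` characterized by the sequence `d` (with `d (2n-1) = (1, f p n)`,
`d (2n) = (0, p^n)`) is `{0} × ℤ(p^∞)`. -/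
theorem statement8 (p : ℕ) (hp : p.Prime) (ω : ZMod p) (x : AddCircle (1 : ℝ)) :
    (Filter.Tendsto (fun n : ℕ => (p : ℤ) ^ n • x) Filter.atTop (nhds 0) ∧
        Filter.Tendsto (fun n : ℕ => iotaZMod p ω + fseq p n • x) Filter.atTop (nhds 0)) ↔
      (ω = 0 ∧ ∃ k : ℕ, (p : ℤ) ^ k • x = 0) := by
  constructor
  · rintro ⟨h1, h2⟩
    obtain ⟨k, hk⟩ := torsion_of_tendsto p hp x h1
    refine ⟨?_, k, hk⟩
    have hev : ∀ᶠ n : ℕ in Filter.atTop,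
        iotaZMod p ω + fseq p n • x = iotaZMod p ω := by
      filter_upwards [Filter.eventually_ge_atTop (k + 1)] with n hn
      rw [fseq_smul_eq_zero x hk hn, add_zero]
    have := h2.congr' (hev.mono fun n h => h)
    have h0 : iotaZMod p ω = 0 := tendsto_nhds_unique tendsto_const_nhds this
    exact (iota_eq_zero_iff p hp ω).mp h0
  · rintro ⟨rfl, k, hk⟩
    have hiota : iotaZMod p 0 = 0 := (iota_eq_zero_iff p hp 0).mpr rfl
    constructor
    · have hev : ∀ᶠ n : ℕ in Filter.atTop, (fun n : ℕ => (p : ℤ) ^ n • x) n = 0 := by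
        filter_upwards [Filter.eventually_ge_atTop k] with n hn
        exact smul_pow_eq_zero_of_le x hk hn
      exact Filter.Tendsto.congr' (hev.mono fun n h => h.symm) tendsto_const_nhds
    · have hev : ∀ᶠ n : ℕ in Filter.atTop,
          (fun n : ℕ => iotaZMod p 0 + fseq p n • x) n = 0 := by
        filter_upwards [Filter.eventually_ge_atTop (k + 1)] with n hn
        rw [hiota, fseq_smul_eq_zero x hk hn, add_zero]
      exact Filter.Tendsto.congr' (hev.mono fun n h => h.symm) tendsto_const_nhds
end

section
/- Let γ ≥ 1 and q > 1 be positive integers. Define the sequence d in ℤ by d_{2n−1} = γ + Σ_{i=0}^{n} q^{n³ − i·n} = γ + q^{n³−n²} + ⋯ + q^{n³−2n} + q^{n³−n} + q^{n³} and d_{2n} = q^n, for n ≥ 1. Then d is a T-sequence in ℤ: there exists a Hausdorff group topology on ℤ in which d_n converges to zero. -/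
/-- The sequence `d` in `ℤ`: `d (2n-1) = γ + ∑_{i=0}^{n} q^(n³ - i·n)` and
`d (2n) = q^n`. -/
def dZ (γ q : ℕ) : ℕ → ℤ := fun k =>
  if k % 2 = 1 then
    (γ : ℤ) + ∑ i ∈ Finset.range ((k + 1) / 2 + 1), (q : ℤ) ^ (((k + 1) / 2) ^ 3 - i * ((k + 1) / 2))
  else (q : ℤ) ^ (k / 2)

namespace TSeqAux

open Finset Pointwise

/-- The "block" sums appearing at odd indices. -/
def T (q ν : ℕ) : ℤ := ∑ a ∈ Finset.range (ν + 1), (q : ℤ) ^ (ν ^ 3 - a * ν)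

lemma dZ_odd (γ q k : ℕ) (h : k % 2 = 1) : dZ γ q k = (γ : ℤ) + T q ((k + 1) / 2) := by
  simp [dZ, h, T]

lemma dZ_even (γ q k : ℕ) (h : ¬ k % 2 = 1) : dZ γ q k = (q : ℤ) ^ (k / 2) := by
  simp [dZ, h]

/-- Symmetrized tails of the sequence, together with `0`. -/
def D (γ q k : ℕ) : Set ℤ :=
  {x | x = 0 ∨ ∃ n, k ≤ n ∧ (x = dZ γ q n ∨ x = -dZ γ q n)}

lemma zero_mem_D (γ q k : ℕ) : (0 : ℤ) ∈ D γ q k := Or.inl rfl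

lemma D_anti {γ q k l : ℕ} (h : k ≤ l) : D γ q l ⊆ D γ q k := by
  rintro x (rfl | ⟨n, hn, hx⟩)
  · exact Or.inl rfl
  · exact Or.inr ⟨n, le_trans h hn, hx⟩

lemma neg_mem_D {γ q k : ℕ} {x : ℤ} (h : x ∈ D γ q k) : -x ∈ D γ q k := by
  rcases h with rfl | ⟨n, hn, rfl | rfl⟩
  · exact Or.inl (by simp)
  · exact Or.inr ⟨n, hn, Or.inr rfl⟩
  · exact Or.inr ⟨n, hn, Or.inl (by simp)⟩

/-- The basic neighborhoods of `0`: all finite sums `x₀ + ⋯ + x_{m-1}` with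
`x_i ∈ D γ q (f i)`. -/
def BB (γ q : ℕ) (f : ℕ → ℕ) : Set ℤ :=
  {x | ∃ m, ∃ z : ℕ → ℤ, (∀ i, z i ∈ D γ q (f i)) ∧ x = ∑ i ∈ Finset.range m, z i}

lemma BB_anti {γ q : ℕ} {f g : ℕ → ℕ} (h : ∀ i, f i ≤ g i) : BB γ q g ⊆ BB γ q f := by
  rintro x ⟨m, z, hz, rfl⟩
  exact ⟨m, z, fun i => D_anti (h i) (hz i), rfl⟩

lemma zero_mem_BB (γ q : ℕ) (f : ℕ → ℕ) : (0 : ℤ) ∈ BB γ q f :=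
  ⟨0, fun _ => 0, fun i => zero_mem_D γ q (f i), by simp⟩

lemma neg_mem_BB {γ q : ℕ} {f : ℕ → ℕ} {x : ℤ} (h : x ∈ BB γ q f) : -x ∈ BB γ q f := by
  obtain ⟨m, z, hz, rfl⟩ := h
  exact ⟨m, fun i => -z i, fun i => neg_mem_D (hz i), by rw [← Finset.sum_neg_distrib]⟩

lemma D_subset_BB (γ q : ℕ) (f : ℕ → ℕ) : D γ q (f 0) ⊆ BB γ q f := by
  classical
  intro x hx
  refine ⟨1, fun i => if i = 0 then x else 0, ?_, by simp⟩
  intro i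
  by_cases hi : i = 0
  · subst hi; simpa using hx
  · simp [hi, zero_mem_D]

lemma sum_range_two_mul (u : ℕ → ℤ) (M : ℕ) :
    ∑ j ∈ Finset.range (2 * M), u j = ∑ i ∈ Finset.range M, (u (2 * i) + u (2 * i + 1)) := by
  induction M with
  | zero => simp
  | succ M ih =>
    have h : 2 * (M + 1) = (2 * M) + 1 + 1 := by ring
    rw [h, Finset.sum_range_succ, Finset.sum_range_succ, ih, Finset.sum_range_succ]
    ring

lemma BB_add {γ q : ℕ} {f : ℕ → ℕ} (hf : Monotone f) :
    BB γ q (fun i => f (2 * i + 1)) + BB γ q (fun i => f (2 * i + 1)) ⊆ BB γ q f := by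
  classical
  rintro x hx
  rw [Set.mem_add] at hx
  obtain ⟨a, ⟨m₁, z, hz, rfl⟩, b, ⟨m₂, w, hw, rfl⟩, rfl⟩ := hx
  set M := max m₁ m₂ with hM
  set u : ℕ → ℤ := fun j =>
    if j % 2 = 1 then (if j / 2 < m₁ then z (j / 2) else 0)
    else (if j / 2 < m₂ then w (j / 2) else 0) with hu
  have key : ∀ (m : ℕ) (v : ℕ → ℤ), m ≤ M →
      ∑ i ∈ Finset.range M, (if i < m then v i else 0) = ∑ i ∈ Finset.range m, v i := by
    intro m v hm
    rw [← Finset.sum_subset (Finset.range_subset_range.mpr hm)]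
    · apply Finset.sum_congr rfl
      intro i hi
      rw [if_pos (Finset.mem_range.mp hi)]
    · intro i _ hi
      rw [if_neg (by simpa using hi)]
  refine ⟨2 * M, u, ?_, ?_⟩
  · intro j
    by_cases hj : j % 2 = 1
    · simp only [hu, hj, if_pos]
      split
      · have h2 : 2 * (j / 2) + 1 = j := by omega
        have h3 := hz (j / 2)
        simp only [] at h3
        rw [h2] at h3
        exact h3
      · exact zero_mem_D γ q (f j)
    · simp only [hu, hj, if_neg, if_false]
      split
      · have h2 : j ≤ 2 * (j / 2) + 1 := by omega
        exact D_anti (hf h2) (hw (j / 2))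
      · exact zero_mem_D γ q (f j)
  · rw [sum_range_two_mul]
    have hterm : ∀ i ∈ Finset.range M, u (2 * i) + u (2 * i + 1) =
        (if i < m₂ then w i else 0) + (if i < m₁ then z i else 0) := by
      intro i _
      have e1 : ¬ ((2 * i) % 2 = 1) := by omega
      have e2 : (2 * i) / 2 = i := by omega
      have e3 : (2 * i + 1) % 2 = 1 := by omega
      have e4 : (2 * i + 1) / 2 = i := by omega
      simp [hu, e1, e2, e3, e4]
    rw [Finset.sum_congr rfl hterm, Finset.sum_add_distrib,
      key m₂ w (le_max_right _ _), key m₁ z (le_max_left _ _)]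
    ring

/-- The family of basic neighborhoods, indexed by strictly monotone functions. -/
def basisSets (γ q : ℕ) : Set (Set ℤ) := {U | ∃ f : ℕ → ℕ, StrictMono f ∧ U = BB γ q f}

/-- The additive group filter basis generated by the `BB` sets. -/
def gfb (γ q : ℕ) : AddGroupFilterBasis ℤ where
  sets := basisSets γ q
  nonempty := ⟨BB γ q id, ⟨id, strictMono_id, rfl⟩⟩
  inter_sets := by
    rintro U V ⟨f, hf, rfl⟩ ⟨g, hg, rfl⟩
    refine ⟨BB γ q (fun i => max (f i) (g i)),
      ⟨fun i => max (f i) (g i), fun a b h => max_lt_max (hf h) (hg h), rfl⟩, ?_⟩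
    exact Set.subset_inter (BB_anti fun i => le_max_left _ _) (BB_anti fun i => le_max_right _ _)
  zero' := by
    rintro U ⟨f, hf, rfl⟩
    exact zero_mem_BB γ q f
  add' := by
    rintro U ⟨f, hf, rfl⟩
    refine ⟨BB γ q (fun i => f (2 * i + 1)),
      ⟨fun i => f (2 * i + 1), hf.comp (fun a b h => by omega), rfl⟩, BB_add hf.monotone⟩
  neg' := by
    rintro U ⟨f, hf, rfl⟩
    exact ⟨BB γ q f, ⟨f, hf, rfl⟩, fun x hx => neg_mem_BB hx⟩
  conj' := by
    rintro x₀ U ⟨f, hf, rfl⟩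
    refine ⟨BB γ q f, ⟨f, hf, rfl⟩, fun x hx => ?_⟩
    have h : x₀ + x + -x₀ = x := by ring
    rw [Set.mem_preimage, h]
    exact hx


/-! ### Arithmetic helper lemmas -/

lemma pow_big (n : ℕ) (hn : 24 ≤ n) : 300 * n ^ 3 < 2 ^ n := by
  induction n, hn using Nat.le_induction with
  | base => norm_num
  | succ n hn ih =>
    have h1 : 3 * n ^ 2 + 3 * n + 1 ≤ n ^ 3 := by nlinarith
    have h2 : 2 ^ (n + 1) = 2 * 2 ^ n := by ring
    nlinarith

lemma arith_hi (n i₀ a e : ℕ) (he : e + i₀ * n = n ^ 3) (ha : a < i₀) : e + n ≤ n ^ 3 - a * n := by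
  have h1 : (a + 1) * n ≤ i₀ * n := Nat.mul_le_mul_right n ha
  have h2 : a * n + n ≤ i₀ * n := by nlinarith
  omega

lemma arith_lo (n i₀ a e : ℕ) (he : e + i₀ * n = n ^ 3) (hi₀a : i₀ + 1 ≤ a) (han : a ≤ n)
    (hn : 2 ≤ n) : n ^ 3 - a * n ≤ e - n := by
  have h1 : i₀ * n + n ≤ a * n := by nlinarith [Nat.mul_le_mul_right n hi₀a]
  have h2a : a * n ≤ n * n := Nat.mul_le_mul_right n han
  have h2b : n * n ≤ n ^ 3 := by nlinarith
  omega

lemma arith_e (n i₀ e : ℕ) (he : e + i₀ * n = n ^ 3) (hi₀ : i₀ ≤ n) (hn : 10 ≤ n) : 3 * n ≤ e := by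
  have h2 : i₀ * n ≤ n * n := Nat.mul_le_mul_right n hi₀
  have h3 : n * n + 3 * n ≤ n ^ 3 := by nlinarith
  omega

lemma arith_T (n v e i₀ : ℕ) (he : e + i₀ * n = n ^ 3) (hi₀ : i₀ ≤ n) (hv : v + 1 ≤ n)
    (hn : 10 ≤ n) : v + v ^ 3 ≤ e - n := by
  obtain ⟨w, rfl⟩ : ∃ w, n = w + 1 := ⟨n - 1, by omega⟩
  have h1 : v ^ 3 ≤ w ^ 3 := Nat.pow_le_pow_left (by omega) 3
  have h2 : i₀ * (w + 1) ≤ (w + 1) * (w + 1) := by nlinarith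
  have key : (v + v ^ 3) + (w + 1) + (w + 1) ≤ e := by nlinarith
  omega

lemma sq_le_cube (n : ℕ) (h : 1 ≤ n) : n * n ≤ n ^ 3 := by nlinarith

lemma cube_bound1 (N : ℤ) (h : 150 ≤ N) : N + N*N ≤ 300*N^3 := by nlinarith
lemma cube_bound2 (N : ℤ) (h : 150 ≤ N) : N*N + 2*N ≤ 300*N^3 := by nlinarith
lemma cube_bound3 (N : ℤ) (h : 150 ≤ N) : N + 3 ≤ 300*N^3 := by nlinarith [sq_nonneg N, sq_nonneg (N+1), sq_nonneg (N-1)]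
lemma cube_bound4 (N : ℤ) (h : 150 ≤ N) : 1 + (N*N + 2*N) ≤ 300*N^3 := by nlinarith

lemma inner_card (n A : ℕ) (hn : 1 ≤ n) :
    ((Finset.range (n+1)).filter
      (fun j => n^3 - j*n < A + n ∧ A < n^3 - j*n + n)).card ≤ 2 := by
  classical
  set J := (Finset.range (n+1)).filter
    (fun j => n^3 - j*n < A + n ∧ A < n^3 - j*n + n) with hJ
  rcases Finset.eq_empty_or_nonempty J with hem | hne
  · rw [hem]; simp
  · have hsub : J ⊆ {J.min' hne, J.min' hne + 1} := by
      intro j hj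
      have h1 : J.min' hne ≤ j := Finset.min'_le J j hj
      have hj₀J : J.min' hne ∈ J := Finset.min'_mem J hne
      obtain ⟨hjr, hja, hjb⟩ := Finset.mem_filter.mp hj
      obtain ⟨hj₀r, hj₀a, hj₀b⟩ := Finset.mem_filter.mp hj₀J
      simp only [Finset.mem_insert, Finset.mem_singleton]
      by_contra hcon
      push_neg at hcon
      have h2 : J.min' hne + 2 ≤ j := by omega
      have hjn : j ≤ n := by have := Finset.mem_range.mp hjr; omega
      have hmul1 : (J.min' hne) * n + 2 * n ≤ j * n := by
        have h3 := Nat.mul_le_mul_right n h2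
        nlinarith
      have hmul2 : j * n ≤ n ^ 3 := by
        have m1 := Nat.mul_le_mul_right n hjn
        have m2 : n * n ≤ n ^ 3 := by nlinarith
        omega
      omega
    calc J.card ≤ _ := Finset.card_le_card hsub
      _ ≤ 2 := le_trans (Finset.card_insert_le _ _) (by simp)

/-! ### The key separation lemma -/

set_option maxHeartbeats 4000000 in
theorem key (γ q : ℕ) (hγ : 1 ≤ γ) (hq : 1 < q) (g : ℤ) (hg : g ≠ 0) :
    ∃ f : ℕ → ℕ, StrictMono f ∧ g ∉ BB γ q f := by
  classical
  set K : ℕ := γ + g.natAbs + 150 with hK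
  set C : ℕ := 2 * K with hC
  have hC0 : 0 < C := by omega
  refine ⟨fun i => C * 4 ^ i, fun a b hab =>
    mul_lt_mul_of_pos_left (Nat.pow_lt_pow_right (by norm_num) hab) hC0, ?_⟩
  rintro ⟨m, z, hz, hsum⟩
  have hq2 : (2 : ℤ) ≤ (q : ℤ) := by exact_mod_cast hq
  have hQ0 : (0 : ℤ) < (q : ℤ) := by linarith
  have hQ1 : (1 : ℤ) ≤ (q : ℤ) := by linarith
  -- extract indices and signs
  have hchoice : ∀ i, z i ≠ 0 → ∃ n, C * 4 ^ i ≤ n ∧ (z i = dZ γ q n ∨ z i = -dZ γ q n) := by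
    intro i hi
    rcases hz i with h0 | ⟨n, hn, hx⟩
    · exact absurd h0 hi
    · exact ⟨n, hn, hx⟩
  choose! idx hidx1 hidx2 using hchoice
  set I : Finset ℕ := (Finset.range m).filter (fun i => z i ≠ 0) with hI
  set sgn : ℕ → ℤ := fun i => if z i = dZ γ q (idx i) then 1 else -1 with hsgn
  have habs_sgn : ∀ i, |sgn i| = 1 := by
    intro i
    rw [hsgn]
    dsimp only
    split <;> simp
  have hzI : ∀ i ∈ I, z i = sgn i * dZ γ q (idx i) := by
    intro i hi
    have hne : z i ≠ 0 := (Finset.mem_filter.mp hi).2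
    rw [hsgn]
    dsimp only
    split
    · rename_i h; rw [h]; ring
    · rename_i h
      rcases hidx2 i hne with h' | h'
      · exact absurd h' h
      · rw [h']; ring
  have hidxI : ∀ i ∈ I, C * 4 ^ i ≤ idx i := fun i hi => hidx1 i (Finset.mem_filter.mp hi).2
  have hidxC : ∀ i ∈ I, C ≤ idx i := by
    intro i hi
    have h1 := hidxI i hi
    have h4 : 1 ≤ 4 ^ i := Nat.one_le_pow _ _ (by norm_num)
    nlinarith
  set Io : Finset ℕ := I.filter (fun i => idx i % 2 = 1) with hIo
  set Ie : Finset ℕ := I.filter (fun i => ¬ idx i % 2 = 1) with hIe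
  set ν : ℕ → ℕ := fun i => (idx i + 1) / 2 with hν
  set α : ℕ → ℕ := fun i => idx i / 2 with hα
  have hνdef : ∀ i, ν i = (idx i + 1) / 2 := fun _ => rfl
  have hαdef : ∀ i, α i = idx i / 2 := fun _ => rfl
  -- master equation
  have hIsum : ∑ i ∈ I, z i = ∑ i ∈ Finset.range m, z i := by
    rw [hI]; exact Finset.sum_filter_ne_zero _
  have hsplit : g = ∑ i ∈ Io, z i + ∑ i ∈ Ie, z i := by
    rw [hIo, hIe, Finset.sum_filter_add_sum_filter_not I _ z, hIsum, ← hsum]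
  set t : ℤ := ∑ i ∈ Io, sgn i with ht
  have hIoz : ∑ i ∈ Io, z i = t * γ + ∑ i ∈ Io, sgn i * T q (ν i) := by
    have hterm : ∀ i ∈ Io, z i = sgn i * (γ : ℤ) + sgn i * T q (ν i) := by
      intro i hi
      obtain ⟨hiI, hodd⟩ := Finset.mem_filter.mp hi
      rw [hzI i hiI, dZ_odd γ q (idx i) hodd, hνdef i, mul_add]
    rw [Finset.sum_congr rfl hterm, Finset.sum_add_distrib, ← Finset.sum_mul, ht]
  have hIez : ∑ i ∈ Ie, z i = ∑ i ∈ Ie, sgn i * (q : ℤ) ^ (α i) := by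
    refine Finset.sum_congr rfl (fun i hi => ?_)
    obtain ⟨hiI, heven⟩ := Finset.mem_filter.mp hi
    rw [hzI i hiI, dZ_even γ q (idx i) heven, hαdef i]
  set V : Finset ℕ := Io.image ν with hV
  set c : ℕ → ℤ := fun v => ∑ i ∈ Io.filter (fun i => ν i = v), sgn i with hc
  have hcdef : ∀ v, c v = ∑ i ∈ Io.filter (fun i => ν i = v), sgn i := fun _ => rfl
  have hmaps : ∀ i ∈ Io, ν i ∈ V := fun i hi => hV ▸ Finset.mem_image_of_mem ν hi
  have hfib : ∑ i ∈ Io, sgn i * T q (ν i) = ∑ v ∈ V, c v * T q v := by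
    rw [← Finset.sum_fiberwise_of_maps_to hmaps (fun i => sgn i * T q (ν i))]
    refine Finset.sum_congr rfl (fun v hv => ?_)
    rw [hcdef v, Finset.sum_mul]
    refine Finset.sum_congr rfl (fun i hi => ?_)
    rw [(Finset.mem_filter.mp hi).2]
  have htV : t = ∑ v ∈ V, c v := by
    rw [ht, ← Finset.sum_fiberwise_of_maps_to hmaps sgn]
  set S : Finset ℕ := V.filter (fun v => c v ≠ 0) with hS
  have hVSsum : ∑ v ∈ S, c v * T q v = ∑ v ∈ V, c v * T q v := by
    rw [hS]
    exact Finset.sum_filter_of_ne (fun v hv hne hc0 => hne (by rw [hc0, zero_mul]))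
  have htS : t = ∑ v ∈ S, c v := by
    rw [htV, hS]
    exact (Finset.sum_filter_of_ne (fun v hv h => h)).symm
  have hME : g = t * γ + ∑ v ∈ S, c v * T q v + ∑ i ∈ Ie, sgn i * (q : ℤ) ^ (α i) := by
    rw [hVSsum, ← hfib, ← hIoz, ← hIez]
    exact hsplit
  by_cases hSemp : S = ∅
  · -- no odd blocks: `g` is divisible by a huge power of `q`
    have ht0 : t = 0 := by rw [htS, hSemp, Finset.sum_empty]
    have hgEv : g = ∑ i ∈ Ie, sgn i * (q : ℤ) ^ (α i) := by
      rw [hME, hSemp, ht0, Finset.sum_empty]; ring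
    have hdvd : (q : ℤ) ^ K ∣ g := by
      rw [hgEv]
      refine Finset.dvd_sum (fun i hi => ?_)
      have hiI : i ∈ I := (Finset.mem_filter.mp hi).1
      have h1 := hidxC i hiI
      have h2 := hαdef i
      have hKα : K ≤ α i := by omega
      exact Dvd.dvd.mul_left (pow_dvd_pow _ hKα) _
    have hle : (q : ℤ) ^ K ≤ |g| := Int.le_of_dvd (abs_pos.mpr hg) ((dvd_abs _ _).mpr hdvd)
    have h2K : (2 : ℤ) ^ K ≤ (q : ℤ) ^ K := pow_le_pow_left₀ (by norm_num) hq2 K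
    have hgK : |g| < 2 ^ K := by
      have h1 : g.natAbs < 2 ^ K :=
        lt_of_lt_of_le ((Nat.lt_two_pow_self (n := g.natAbs))) (Nat.pow_le_pow_right (by norm_num) (by omega))
      calc |g| = (g.natAbs : ℤ) := by rw [Int.abs_eq_natAbs]
        _ < ((2 ^ K : ℕ) : ℤ) := by exact_mod_cast h1
        _ = 2 ^ K := by push_cast; ring
    linarith
  · -- there is a largest odd block `n`; derive a contradiction by isolating one of its powers
    have hSne : S.Nonempty := Finset.nonempty_of_ne_empty hSemp
    set n : ℕ := S.max' hSne with hn
    have hnS : n ∈ S := S.max'_mem hSne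
    have hcn0 : c n ≠ 0 := (Finset.mem_filter.mp hnS).2
    have hvle : ∀ v ∈ S, v ≤ n := fun v hv => S.le_max' v hv
    have hnK : K ≤ n := by
      have hnV : n ∈ V := (Finset.mem_filter.mp hnS).1
      obtain ⟨i₁, hi₁, hνi₁⟩ := Finset.mem_image.mp (hV ▸ hnV)
      have hiI : i₁ ∈ I := (Finset.mem_filter.mp hi₁).1
      have h2 := hidxC i₁ hiI
      have h3 := hνdef i₁
      omega
    have hn150 : 150 ≤ n := by omega
    have hγn : γ ≤ n := by omega
    have hgn : g.natAbs ≤ n := by omega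
    -- the master count
    set master : Finset ℕ := I.filter (fun i => idx i ≤ 4 * (n ^ 3 + n)) with hmaster
    set ρ : ℕ := master.card with hρ
    have hρle : ρ ≤ n / 4 + 1 := by
      rw [hρ]
      refine le_trans (Finset.card_le_card (t := Finset.range (n / 4 + 1)) ?_)
        (le_of_eq (Finset.card_range _))
      intro i hi
      obtain ⟨hiI, hile⟩ := Finset.mem_filter.mp hi
      rw [Finset.mem_range]
      by_contra hcon
      push_neg at hcon
      have h4i : (4:ℕ) ^ (n / 4 + 1) ≤ 4 ^ i := Nat.pow_le_pow_right (by norm_num) hcon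
      have h1 : (4:ℕ) ^ i ≤ 4 * (n ^ 3 + n) :=
        le_trans (le_trans (Nat.le_mul_of_pos_left _ hC0) (hidxI i hiI)) hile
      set a : ℕ := n / 4 with ha
      have ha37 : 37 ≤ a := by omega
      have h2 := pow_big (2 * a) (by omega)
      have h24 : (4:ℕ) ^ (a + 1) = 4 * 2 ^ (2 * a) := by
        rw [pow_succ, show (4:ℕ) = 2 ^ 2 from rfl, ← pow_mul]
        ring
      have hn4a : n ≤ 4 * a + 3 := by omega
      have h7 : n ^ 3 + n < 2 ^ (2 * a) := by
        have h5 : n ^ 3 ≤ (4 * a + 3) ^ 3 := Nat.pow_le_pow_left hn4a 3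
        nlinarith
      omega
    have h2ρ : 2 * ρ ≤ n := by omega
    have hρn : ρ ≤ n := by omega
    -- total multiplicity bounds
    have hfibcard : ∀ v, |c v| ≤ ((Io.filter (fun i => ν i = v)).card : ℤ) := by
      intro v
      calc |c v| ≤ ∑ i ∈ Io.filter (fun i => ν i = v), |sgn i| := by
            rw [hcdef v]; exact Finset.abs_sum_le_sum_abs _ _
        _ = ∑ i ∈ Io.filter (fun i => ν i = v), (1:ℤ) :=
            Finset.sum_congr rfl (fun i _ => habs_sgn i)
        _ = _ := by simp
    have hIoSsub : Io.filter (fun i => ν i ∈ S) ⊆ master := by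
      intro i hi
      obtain ⟨hio, hiS⟩ := Finset.mem_filter.mp hi
      obtain ⟨hiI, hodd⟩ := Finset.mem_filter.mp hio
      refine Finset.mem_filter.mpr ⟨hiI, ?_⟩
      have h1 : ν i ≤ n := hvle _ hiS
      have h2 := hνdef i
      have h3 : n ≤ n ^ 3 := Nat.le_self_pow (by norm_num) n
      omega
    have hcount : ∑ v ∈ S, ((Io.filter (fun i => ν i = v)).card)
        = (Io.filter (fun i => ν i ∈ S)).card := by
      rw [Finset.card_eq_sum_card_fiberwise (f := ν) (s := Io.filter (fun i => ν i ∈ S)) (t := S)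
        (fun i hi => (Finset.mem_filter.mp hi).2)]
      refine Finset.sum_congr rfl (fun v hv => ?_)
      congr 1
      ext i
      simp only [Finset.mem_filter]
      constructor
      · rintro ⟨h1, h3⟩
        exact ⟨⟨h1, by rw [h3]; exact hv⟩, h3⟩
      · rintro ⟨⟨h1, h2⟩, h3⟩
        exact ⟨h1, h3⟩
    have hsumc : ∑ v ∈ S, |c v| ≤ (ρ : ℤ) := by
      calc ∑ v ∈ S, |c v| ≤ ∑ v ∈ S, ((Io.filter (fun i => ν i = v)).card : ℤ) :=
            Finset.sum_le_sum (fun v _ => hfibcard v)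
        _ = ((∑ v ∈ S, (Io.filter (fun i => ν i = v)).card : ℕ) : ℤ) := by push_cast; rfl
        _ = ((Io.filter (fun i => ν i ∈ S)).card : ℤ) := by rw [hcount]
        _ ≤ (ρ : ℤ) := by exact_mod_cast Finset.card_le_card hIoSsub
    have hcn_le : |c n| ≤ (ρ : ℤ) :=
      le_trans (Finset.single_le_sum (fun v _ => abs_nonneg (c v)) hnS) hsumc
    have hcn1 : (1:ℤ) ≤ |c n| := Int.one_le_abs hcn0
    have ht_le : |t| ≤ (ρ : ℤ) := by
      rw [htS]
      exact le_trans (Finset.abs_sum_le_sum_abs _ _) hsumc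
    -- choose an isolated exponent in the top block
    have hinner : ∀ A : ℕ, ((Finset.range (n+1)).filter
        (fun j => n^3 - j*n < A + n ∧ A < n^3 - j*n + n)).card ≤ 2 :=
      fun A => inner_card n A (by omega)
    set Bad : Finset ℕ := (Finset.range (n+1)).filter
        (fun j => ∃ i ∈ Ie, n^3 - j*n < α i + n ∧ α i < n^3 - j*n + n) with hBad
    have hBadsub : Bad ⊆ (Ie.filter (fun i => idx i ≤ 4*(n^3+n))).biUnion
        (fun i => (Finset.range (n+1)).filter
          (fun j => n^3 - j*n < α i + n ∧ α i < n^3 - j*n + n)) := by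
      intro j hj
      obtain ⟨hjr, i, hiIe, h1, h2⟩ := Finset.mem_filter.mp hj
      refine Finset.mem_biUnion.mpr ⟨i, Finset.mem_filter.mpr ⟨hiIe, ?_⟩,
        Finset.mem_filter.mpr ⟨hjr, h1, h2⟩⟩
      have hev : ¬ idx i % 2 = 1 := (Finset.mem_filter.mp hiIe).2
      have h3 := hαdef i
      have h4 : n^3 - j*n ≤ n^3 := Nat.sub_le _ _
      omega
    have hBadcard : Bad.card ≤ 2 * ρ := by
      refine le_trans (Finset.card_le_card hBadsub) (le_trans (Finset.card_biUnion_le) ?_)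
      refine le_trans (Finset.sum_le_sum (fun i _ => hinner (α i))) ?_
      rw [Finset.sum_const, smul_eq_mul]
      have hsub2 : Ie.filter (fun i => idx i ≤ 4*(n^3+n)) ⊆ master := by
        intro i hi
        obtain ⟨hiIe, h1⟩ := Finset.mem_filter.mp hi
        exact Finset.mem_filter.mpr ⟨(Finset.mem_filter.mp hiIe).1, h1⟩
      have h5 := Finset.card_le_card hsub2
      omega
    obtain ⟨i₀, hi₀r, hi₀bad⟩ : ∃ i₀ ∈ Finset.range (n+1), i₀ ∉ Bad := by
      by_contra hcon
      push_neg at hcon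
      have h1 := Finset.card_le_card (fun j hj => hcon j hj)
      rw [Finset.card_range] at h1
      omega
    have hi₀n : i₀ ≤ n := by have := Finset.mem_range.mp hi₀r; omega
    have hgood : ∀ i ∈ Ie, α i + n ≤ n^3 - i₀*n ∨ n^3 - i₀*n + n ≤ α i := by
      intro i hi
      by_contra hcon
      push_neg at hcon
      exact hi₀bad (Finset.mem_filter.mpr ⟨hi₀r, ⟨i, hi, by omega, by omega⟩⟩)
    have hi₀nle : i₀ * n ≤ n^3 :=
      le_trans (Nat.mul_le_mul_right n hi₀n) (sq_le_cube n (by omega))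
    obtain ⟨e, he⟩ : ∃ e, e + i₀ * n = n^3 := ⟨n^3 - i₀*n, by omega⟩
    have hee : n^3 - i₀*n = e := by omega
    have hgood2 : ∀ i ∈ Ie, α i + n ≤ e ∨ e + n ≤ α i := by
      intro i hi
      rcases hgood i hi with h | h
      · exact Or.inl (by omega)
      · exact Or.inr (by omega)
    have he3 : 3*n ≤ e := arith_e n i₀ e he hi₀n (by omega)
    have hele : e ≤ n^3 := by omega
    have hensub : (e - n) + n = e := by omega
    -- split the master equation around the isolated exponent
    have hTn : T q n = (∑ a ∈ Finset.range i₀, (q:ℤ)^(n^3 - a*n)) + (q:ℤ)^e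
        + (∑ a ∈ Finset.Ico (i₀+1) (n+1), (q:ℤ)^(n^3 - a*n)) := by
      rw [show T q n = ∑ a ∈ Finset.range (n+1), (q:ℤ)^(n^3 - a*n) from rfl,
        Finset.range_eq_Ico, ← Finset.sum_Ico_consecutive _ (Nat.zero_le i₀)
          (by omega : i₀ ≤ n+1),
        Finset.sum_eq_sum_Ico_succ_bot (by omega : i₀ < n+1), ← Finset.range_eq_Ico, hee]
      ring
    have hEvsplit : ∑ i ∈ Ie, sgn i * (q:ℤ)^(α i)
        = (∑ i ∈ Ie.filter (fun i => e + n ≤ α i), sgn i * (q:ℤ)^(α i))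
        + (∑ i ∈ Ie.filter (fun i => ¬ (e + n ≤ α i)), sgn i * (q:ℤ)^(α i)) :=
      (Finset.sum_filter_add_sum_filter_not Ie _ _).symm
    have hSsplit : ∑ v ∈ S, c v * T q v = c n * T q n + ∑ v ∈ S.erase n, c v * T q v :=
      (Finset.add_sum_erase S _ hnS).symm
    set HiB : ℤ := ∑ a ∈ Finset.range i₀, (q:ℤ)^(n^3 - a*n) with hHiB
    set LoB : ℤ := ∑ a ∈ Finset.Ico (i₀+1) (n+1), (q:ℤ)^(n^3 - a*n) with hLoB
    set EvHi : ℤ := ∑ i ∈ Ie.filter (fun i => e + n ≤ α i), sgn i * (q:ℤ)^(α i) with hEvHi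
    set EvLo : ℤ := ∑ i ∈ Ie.filter (fun i => ¬ (e + n ≤ α i)), sgn i * (q:ℤ)^(α i) with hEvLo
    set Rest : ℤ := ∑ v ∈ S.erase n, c v * T q v with hRest
    have hME2 : g = t * γ + c n * (q:ℤ)^e + (c n * HiB + EvHi)
        + (c n * LoB + Rest + EvLo) := by
      rw [hME, hSsplit, hTn, hEvsplit]
      ring
    -- divisibility of the high part
    have hdvdHi : (q:ℤ)^(e+n) ∣ (c n * HiB + EvHi) := by
      refine dvd_add (Dvd.dvd.mul_left ?_ _) ?_
      · rw [hHiB]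
        exact Finset.dvd_sum (fun a ha =>
          pow_dvd_pow _ (arith_hi n i₀ a e he (Finset.mem_range.mp ha)))
      · rw [hEvHi]
        exact Finset.dvd_sum (fun i hi =>
          Dvd.dvd.mul_left (pow_dvd_pow _ (Finset.mem_filter.mp hi).2) _)
    -- size bounds on the low parts
    have hLoB0 : 0 ≤ LoB := by
      rw [hLoB]; exact Finset.sum_nonneg (fun a _ => pow_nonneg (le_of_lt hQ0) _)
    have hLoBle : LoB ≤ (n:ℤ) * (q:ℤ)^(e-n) := by
      rw [hLoB]
      refine le_trans (Finset.sum_le_card_nsmul _ _ ((q:ℤ)^(e-n)) ?_) ?_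
      · intro a ha
        obtain ⟨h1, h2⟩ := Finset.mem_Ico.mp ha
        exact pow_le_pow_right₀ hQ1 (arith_lo n i₀ a e he h1 (by omega) (by omega))
      · rw [nsmul_eq_mul, Nat.card_Ico]
        have h6 : ((n + 1 - (i₀+1) : ℕ):ℤ) ≤ (n:ℤ) := by exact_mod_cast (by omega : n + 1 - (i₀+1) ≤ n)
        exact mul_le_mul_of_nonneg_right h6 (pow_nonneg (le_of_lt hQ0) _)
    have hTpos : ∀ v : ℕ, 0 < T q v := fun v =>
      Finset.sum_pos (fun a _ => pow_pos hQ0 _) Finset.nonempty_range_add_one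
    have hTvle : ∀ v, v + 1 ≤ n → T q v ≤ (q:ℤ)^(e-n) := by
      intro v hv
      have h1 : T q v ≤ ((v+1 : ℕ):ℤ) * (q:ℤ)^(v^3) := by
        rw [show T q v = ∑ a ∈ Finset.range (v+1), (q:ℤ)^(v^3 - a*v) from rfl]
        refine le_trans (Finset.sum_le_card_nsmul _ _ ((q:ℤ)^(v^3))
          (fun a _ => pow_le_pow_right₀ hQ1 (Nat.sub_le _ _))) ?_
        rw [nsmul_eq_mul, Finset.card_range]
      have h2 : ((v+1:ℕ):ℤ) ≤ (q:ℤ)^v :=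
        le_trans (by exact_mod_cast (Nat.lt_two_pow_self (n := v))) (pow_le_pow_left₀ (by norm_num) hq2 v)
      calc T q v ≤ ((v+1:ℕ):ℤ) * (q:ℤ)^(v^3) := h1
        _ ≤ (q:ℤ)^v * (q:ℤ)^(v^3) := mul_le_mul_of_nonneg_right h2 (pow_nonneg (le_of_lt hQ0) _)
        _ = (q:ℤ)^(v + v^3) := (pow_add _ _ _).symm
        _ ≤ (q:ℤ)^(e-n) := pow_le_pow_right₀ hQ1 (arith_T n v e i₀ he hi₀n hv (by omega))
    have hRestle : |Rest| ≤ (ρ:ℤ) * (q:ℤ)^(e-n) := by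
      rw [hRest]
      calc |∑ v ∈ S.erase n, c v * T q v| ≤ ∑ v ∈ S.erase n, |c v * T q v| :=
            Finset.abs_sum_le_sum_abs _ _
        _ ≤ ∑ v ∈ S.erase n, |c v| * (q:ℤ)^(e-n) := by
            refine Finset.sum_le_sum (fun v hv => ?_)
            rw [abs_mul, abs_of_pos (hTpos v)]
            refine mul_le_mul_of_nonneg_left (hTvle v ?_) (abs_nonneg _)
            have h1 : v ∈ S := Finset.mem_of_mem_erase hv
            have h2 : v ≠ n := Finset.ne_of_mem_erase hv
            have h5 := hvle v h1
            omega
        _ = (∑ v ∈ S.erase n, |c v|) * (q:ℤ)^(e-n) := (Finset.sum_mul _ _ _).symm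
        _ ≤ (ρ:ℤ) * (q:ℤ)^(e-n) := by
            refine mul_le_mul_of_nonneg_right ?_ (pow_nonneg (le_of_lt hQ0) _)
            exact le_trans (Finset.sum_le_sum_of_subset_of_nonneg (Finset.erase_subset _ _)
              (fun _ _ _ => abs_nonneg _)) hsumc
    have hEvLole : |EvLo| ≤ (ρ:ℤ) * (q:ℤ)^(e-n) := by
      rw [hEvLo]
      calc |∑ i ∈ Ie.filter (fun i => ¬ (e + n ≤ α i)), sgn i * (q:ℤ)^(α i)|
          ≤ ∑ i ∈ Ie.filter (fun i => ¬ (e + n ≤ α i)), |sgn i * (q:ℤ)^(α i)| :=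
            Finset.abs_sum_le_sum_abs _ _
        _ ≤ ∑ i ∈ Ie.filter (fun i => ¬ (e + n ≤ α i)), (q:ℤ)^(e-n) := by
            refine Finset.sum_le_sum (fun i hi => ?_)
            obtain ⟨hiIe, hnot⟩ := Finset.mem_filter.mp hi
            rw [abs_mul, habs_sgn i, one_mul, abs_of_pos (pow_pos hQ0 _)]
            have h1 : α i + n ≤ e := by
              rcases hgood2 i hiIe with h | h
              · omega
              · exact absurd (by omega) hnot
            exact pow_le_pow_right₀ hQ1 (by omega)
        _ = ((Ie.filter (fun i => ¬ (e + n ≤ α i))).card : ℤ) * (q:ℤ)^(e-n) := by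
            rw [Finset.sum_const, nsmul_eq_mul]
        _ ≤ (ρ:ℤ) * (q:ℤ)^(e-n) := by
            refine mul_le_mul_of_nonneg_right ?_ (pow_nonneg (le_of_lt hQ0) _)
            have hsub3 : Ie.filter (fun i => ¬ (e + n ≤ α i)) ⊆ master := by
              intro i hi
              obtain ⟨hiIe, hnot⟩ := Finset.mem_filter.mp hi
              have h1 : α i + n ≤ e := by
                rcases hgood2 i hiIe with h | h
                · omega
                · exact absurd (by omega) hnot
              obtain ⟨hiI, hev⟩ := Finset.mem_filter.mp hiIe
              refine Finset.mem_filter.mpr ⟨hiI, ?_⟩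
              have h3 := hαdef i
              omega
            exact_mod_cast Finset.card_le_card hsub3
    -- numeric endgame
    clear_value K C I sgn Io Ie ν α t V c S n master ρ Bad HiB LoB EvHi EvLo Rest
    clear hidx1 hidx2 hzI hidxI hidxC hIsum hsplit hIoz hIez hfib htV hVSsum hME
    clear hTn hEvsplit hSsplit hgood hgood2 hinner hBadsub hBadcard hfibcard hIoSsub
    clear hcount hρle hvle hmaps hcdef hνdef hαdef habs_sgn hTvle hTpos hsum
    clear hnS hi₀r hi₀bad hee hi₀nle hsumc hnK
    clear hmaster hI hsgn hIo hIe hν hα hV hc hS hn hρ hBad hHiB hLoB hEvHi hEvLo hRest ht hz hK hC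
    clear z idx m
    set N : ℤ := (n:ℤ) with hN
    have hN1 : (150:ℤ) ≤ N := by rw [hN]; exact_mod_cast hn150
    have hPN : (ρ:ℤ) ≤ N := by rw [hN]; exact_mod_cast hρn
    have hP0 : (0:ℤ) ≤ (ρ:ℤ) := Int.natCast_nonneg _
    have hgN : |g| ≤ N := by
      rw [Int.abs_eq_natAbs, hN]; exact_mod_cast hgn
    have hγN : (γ:ℤ) ≤ N := by rw [hN]; exact_mod_cast hγn
    have h300 : 300 * N^3 < (q:ℤ)^n := by
      have h1 : 300 * n^3 < 2^n := pow_big n (by omega)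
      calc 300 * N^3 = ((300 * n^3 : ℕ) : ℤ) := by rw [hN]; push_cast; ring
        _ < ((2^n : ℕ) : ℤ) := by exact_mod_cast h1
        _ = (2:ℤ)^n := by push_cast; ring
        _ ≤ (q:ℤ)^n := pow_le_pow_left₀ (by norm_num) hq2 n
    have hQe : (0:ℤ) < (q:ℤ)^e := pow_pos hQ0 e
    have hQen : (0:ℤ) < (q:ℤ)^(e-n) := pow_pos hQ0 (e-n)
    have hQn : (0:ℤ) < (q:ℤ)^n := pow_pos hQ0 n
    have hQmul : (q:ℤ)^(e-n) * (q:ℤ)^n = (q:ℤ)^e := by rw [← pow_add, hensub]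
    have hQmul2 : (q:ℤ)^e * (q:ℤ)^n = (q:ℤ)^(e+n) := by rw [← pow_add]
    have hQne : (q:ℤ)^n ≤ (q:ℤ)^e := pow_le_pow_right₀ hQ1 (by omega)
    have hQnen : (q:ℤ)^n ≤ (q:ℤ)^(e-n) := pow_le_pow_right₀ hQ1 (by omega)
    have hLoabs : |c n * LoB + Rest + EvLo| ≤ (N*N + 2*N) * (q:ℤ)^(e-n) := by
      have h2 : |c n * LoB| ≤ N * (N * (q:ℤ)^(e-n)) := by
        rw [abs_mul, abs_of_nonneg hLoB0]
        refine mul_le_mul (le_trans hcn_le hPN) hLoBle hLoB0 (by linarith)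
      have h3 : (ρ:ℤ) * (q:ℤ)^(e-n) ≤ N * (q:ℤ)^(e-n) :=
        mul_le_mul_of_nonneg_right hPN (le_of_lt hQen)
      calc |c n * LoB + Rest + EvLo| ≤ |c n * LoB + Rest| + |EvLo| := abs_add_le _ _
        _ ≤ |c n * LoB| + |Rest| + |EvLo| := by linarith [abs_add_le (c n * LoB) Rest]
        _ ≤ N * (N * (q:ℤ)^(e-n)) + N * (q:ℤ)^(e-n) + N * (q:ℤ)^(e-n) := by
            linarith [hRestle, hEvLole]
        _ = (N*N + 2*N) * (q:ℤ)^(e-n) := by ring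
    have htγ : |t * γ| ≤ N * N := by
      rw [abs_mul, abs_of_nonneg (show (0:ℤ) ≤ (γ:ℤ) from Int.natCast_nonneg _)]
      refine mul_le_mul (le_trans ht_le hPN) hγN (Int.natCast_nonneg _) (by linarith)
    have hcnQe : |c n * (q:ℤ)^e| = |c n| * (q:ℤ)^e := by rw [abs_mul, abs_of_pos hQe]
    have hcnN : |c n| ≤ N := le_trans hcn_le hPN
    have b4 : N + N*N ≤ 300*N^3 := cube_bound1 N hN1
    have b5 : N*N + 2*N ≤ 300*N^3 := cube_bound2 N hN1
    have b6 : (N*N + 2*N) * (q:ℤ)^(e-n) < (q:ℤ)^e := by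
      calc (N*N+2*N) * (q:ℤ)^(e-n) ≤ 300*N^3 * (q:ℤ)^(e-n) :=
            mul_le_mul_of_nonneg_right b5 (le_of_lt hQen)
        _ < (q:ℤ)^n * (q:ℤ)^(e-n) := mul_lt_mul_of_pos_right h300 hQen
        _ = (q:ℤ)^e := by rw [mul_comm]; exact hQmul
    have b7 : N + N*N ≤ (q:ℤ)^e := le_trans b4 (le_trans (le_of_lt h300) hQne)
    have b7' : N + N*N ≤ (q:ℤ)^(e-n) := le_trans b4 (le_trans (le_of_lt h300) hQnen)
    set X : ℤ := c n * HiB + EvHi with hX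
    have hXeq : X = g - t * γ - c n * (q:ℤ)^e - (c n * LoB + Rest + EvLo) := by
      rw [hX, hME2]; ring
    have hXabs : |X| < (q:ℤ)^(e+n) := by
      have b1 : |X| ≤ |g| + |t*γ| + |c n * (q:ℤ)^e| + |c n * LoB + Rest + EvLo| := by
        rw [hXeq]
        have l1 := le_abs_self g; have l2 := neg_abs_le g
        have l3 := le_abs_self (t*(γ:ℤ)); have l4 := neg_abs_le (t*(γ:ℤ))
        have l5 := le_abs_self (c n * (q:ℤ)^e); have l6 := neg_abs_le (c n * (q:ℤ)^e)
        have l7 := le_abs_self (c n * LoB + Rest + EvLo)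
        have l8 := neg_abs_le (c n * LoB + Rest + EvLo)
        refine abs_le.mpr ⟨by linarith, by linarith⟩
      rw [hcnQe] at b1
      have b2 : |c n| * (q:ℤ)^e ≤ N * (q:ℤ)^e :=
        mul_le_mul_of_nonneg_right hcnN (le_of_lt hQe)
      have b8 : |X| < (N+3) * (q:ℤ)^e := by
        have b8a : |X| ≤ (N + N*N) + N*(q:ℤ)^e + (N*N+2*N)*(q:ℤ)^(e-n) := by
          linarith [hLoabs, htγ, hgN]
        calc |X| ≤ (N + N*N) + N*(q:ℤ)^e + (N*N+2*N)*(q:ℤ)^(e-n) := b8a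
          _ < (q:ℤ)^e + N*(q:ℤ)^e + 2*(q:ℤ)^e := by linarith [b6, b7]
          _ = (N+3) * (q:ℤ)^e := by ring
      have b9 : (N+3) ≤ (q:ℤ)^n := le_trans (cube_bound3 N hN1) (le_of_lt h300)
      calc |X| < (N+3) * (q:ℤ)^e := b8
        _ ≤ (q:ℤ)^n * (q:ℤ)^e := mul_le_mul_of_nonneg_right b9 (le_of_lt hQe)
        _ = (q:ℤ)^(e+n) := by rw [mul_comm]; exact hQmul2
    have hX0 : X = 0 := by
      by_contra hX0
      have h1 : (q:ℤ)^(e+n) ≤ |X| :=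
        Int.le_of_dvd (abs_pos.mpr hX0) ((dvd_abs _ _).mpr (hX ▸ hdvdHi))
      linarith
    -- final contradiction
    have hfin : |c n| * (q:ℤ)^e ≤ (N + N*N) + (N*N + 2*N) * (q:ℤ)^(e-n) := by
      have hXeq0 : c n * (q:ℤ)^e = g - t*γ - (c n * LoB + Rest + EvLo) := by
        have h1 := hXeq
        rw [hX0] at h1
        linarith
      have l1 := le_abs_self g; have l2 := neg_abs_le g
      have l3 := le_abs_self (t*(γ:ℤ)); have l4 := neg_abs_le (t*(γ:ℤ))
      have l7 := le_abs_self (c n * LoB + Rest + EvLo)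
      have l8 := neg_abs_le (c n * LoB + Rest + EvLo)
      have h2 : |c n * (q:ℤ)^e| ≤ |g| + |t*γ| + |c n * LoB + Rest + EvLo| := by
        rw [hXeq0]
        refine abs_le.mpr ⟨by linarith, by linarith⟩
      rw [hcnQe] at h2
      linarith [hLoabs, htγ, hgN]
    have hcontra : (q:ℤ)^e < (q:ℤ)^e := by
      calc (q:ℤ)^e = 1 * (q:ℤ)^e := (one_mul _).symm
        _ ≤ |c n| * (q:ℤ)^e := mul_le_mul_of_nonneg_right hcn1 (le_of_lt hQe)
        _ ≤ (N + N*N) + (N*N + 2*N) * (q:ℤ)^(e-n) := hfin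
        _ ≤ (q:ℤ)^(e-n) + (N*N + 2*N) * (q:ℤ)^(e-n) := by linarith [b7']
        _ = (1 + (N*N + 2*N)) * (q:ℤ)^(e-n) := by ring
        _ ≤ 300*N^3 * (q:ℤ)^(e-n) :=
            mul_le_mul_of_nonneg_right (cube_bound4 N hN1) (le_of_lt hQen)
        _ < (q:ℤ)^n * (q:ℤ)^(e-n) := mul_lt_mul_of_pos_right h300 hQen
        _ = (q:ℤ)^e := by rw [mul_comm]; exact hQmul
    exact lt_irrefl _ hcontra

end TSeqAux

/-- For positive integers `γ ≥ 1` and `q > 1`, `d` is a `T`-sequence in `ℤ`: there is a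
Hausdorff group topology on `ℤ` in which `d n → 0`. -/
theorem statement12 (γ q : ℕ) (hγ : 1 ≤ γ) (hq : 1 < q) :
    ∃ τ : TopologicalSpace ℤ, @IsTopologicalAddGroup ℤ τ _ ∧ @T2Space ℤ τ ∧
      Filter.Tendsto (dZ γ q) Filter.atTop (@nhds ℤ τ 0) := by
  classical
  refine ⟨(TSeqAux.gfb γ q).topology, (TSeqAux.gfb γ q).isTopologicalAddGroup, ?_, ?_⟩
  · letI := (TSeqAux.gfb γ q).topology
    haveI : IsTopologicalAddGroup ℤ := (TSeqAux.gfb γ q).isTopologicalAddGroup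
    refine IsTopologicalAddGroup.t2Space_of_zero_sep ?_
    intro g hg
    obtain ⟨f, hf, hgf⟩ := TSeqAux.key γ q hγ hq g hg
    exact ⟨TSeqAux.BB γ q f, (TSeqAux.gfb γ q).mem_nhds_zero ⟨f, hf, rfl⟩, hgf⟩
  · letI := (TSeqAux.gfb γ q).topology
    rw [Filter.HasBasis.tendsto_right_iff ((TSeqAux.gfb γ q).nhds_zero_hasBasis)]
    rintro U hU
    obtain ⟨f, hf, rfl⟩ : ∃ f, StrictMono f ∧ U = TSeqAux.BB γ q f := hU
    filter_upwards [Filter.eventually_ge_atTop (f 0)] with k hk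
    exact TSeqAux.D_subset_BB γ q f (Or.inr ⟨k, hk, Or.inl rfl⟩)
end

section
/- Let q > 1 be an integer and define the sequence d in ℤ by d_{2n−1} = q + Σ_{i=0}^{n} q^{n³ − i·n} and d_{2n} = q^n for n ≥ 1. Then the subgroup of the circle 𝕋 = ℝ/ℤ characterized by d is the cyclic group of order q: {x ∈ 𝕋 : d_n • x → 0 as n → ∞} = {x ∈ 𝕋 : q • x = 0}. -/
open Filter Finset

private lemma unit_norm (r : ℝ) : ‖((r : ℝ) : AddCircle (1:ℝ))‖ = |r - round r| := by
  rw [AddCircle.norm_eq]; simp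

private lemma aux_pow_int (q : ℕ) (hq : 1 < q) (r : ℝ)
    (h : Filter.Tendsto (fun n : ℕ => (q:ℤ)^n • ((r : ℝ) : AddCircle (1:ℝ)))
      Filter.atTop (nhds 0)) :
    ∃ N : ℕ, ∃ m : ℤ, (q:ℝ)^N * r = m := by
  have hq0 : (0:ℝ) < q := by positivity
  set t : ℕ → ℝ := fun n => (q:ℝ)^n * r - round ((q:ℝ)^n * r) with ht
  have hxn : ∀ n : ℕ, (q:ℤ)^n • ((r : ℝ) : AddCircle (1:ℝ))
      = (((q:ℝ)^n * r : ℝ) : AddCircle (1:ℝ)) := by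
    intro n
    rw [← AddCircle.coe_zsmul]
    norm_num [zsmul_eq_mul]
  have hnorm : Tendsto (fun n => |t n|) atTop (nhds 0) := by
    have := h.norm
    rw [norm_zero] at this
    refine this.congr fun n => ?_
    rw [hxn n, unit_norm]
  have hε : (0:ℝ) < 1/(2*q) := by positivity
  obtain ⟨N, hN⟩ := Filter.eventually_atTop.1 (hnorm.eventually (gt_mem_nhds hε))
  -- key induction
  have key : ∀ k : ℕ, t (N + k) = (q:ℝ)^k * t N := by
    intro k
    induction k with
    | zero => simp
    | succ k ih =>
      have hsmall : |t (N + k)| < 1/(2*q) := hN _ (Nat.le_add_right _ _)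
      have hq2 : (0:ℝ) < 2*q := by positivity
      have hround : round ((q:ℝ) * t (N + k)) = 0 := by
        rw [round_eq_zero_iff]
        have habs : |(q:ℝ) * t (N + k)| < 1/2 := by
          rw [abs_mul, abs_of_pos hq0]
          calc (q:ℝ) * |t (N + k)| < q * (1/(2*q)) := by
                exact mul_lt_mul_of_pos_left hsmall hq0
            _ = 1/2 := by field_simp
        have h12 := abs_lt.1 habs
        rw [Set.mem_Ico]
        constructor
        · linarith [h12.1]
        · linarith [h12.2]
      have hy : (q:ℝ)^(N+k+1) * r = (q:ℝ) * t (N+k) + ((q * round ((q:ℝ)^(N+k) * r) : ℤ) : ℝ) := by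
        simp only [ht]
        push_cast
        ring
      have : t (N + (k+1)) = (q:ℝ) * t (N + k) := by
        show (q:ℝ)^(N+(k+1)) * r - round ((q:ℝ)^(N+(k+1)) * r) = _
        have hnk : N + (k+1) = N + k + 1 := by ring
        rw [hnk, hy, round_add_intCast, hround]
        push_cast
        ring
      rw [this, ih, pow_succ]
      ring
  have htN : t N = 0 := by
    by_contra hne
    have hpos : 0 < |t N| := abs_pos.2 hne
    obtain ⟨k, hk⟩ := pow_unbounded_of_one_lt ((1/(2*q)) / |t N|) (by exact_mod_cast hq : (1:ℝ) < q)
    have : 1/(2*q) < (q:ℝ)^k * |t N| := by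
      rw [div_lt_iff₀ hpos] at hk
      linarith
    have h2 := hN (N + k) (Nat.le_add_right _ _)
    rw [key k, abs_mul, abs_of_pos (by positivity : (0:ℝ) < (q:ℝ)^k)] at h2
    linarith
  refine ⟨N, round ((q:ℝ)^N * r), ?_⟩
  have : (q:ℝ)^N * r - round ((q:ℝ)^N * r) = 0 := htN
  linarith

private lemma dZ_even (γ q n : ℕ) : dZ γ q (2*n) = (q:ℤ)^n := by
  unfold dZ
  rw [if_neg (by omega), Nat.mul_div_cancel_left _ (by norm_num)]

private lemma dZ_odd (γ q n : ℕ) :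
    dZ γ q (2*n+1) = (γ:ℤ) + ∑ i ∈ Finset.range ((n+1) + 1), (q:ℤ) ^ ((n+1)^3 - i*(n+1)) := by
  unfold dZ
  rw [if_pos (by omega)]
  have h1 : (2*n+1+1)/2 = n+1 := by omega
  rw [h1]

/-- For `γ = q > 1`, the subgroup of the circle `𝕋 = ℝ/ℤ` characterized by `d` is the
cyclic subgroup of order `q`. -/
theorem statement15 (q : ℕ) (hq : 1 < q) :
    {x : AddCircle (1 : ℝ) |
        Filter.Tendsto (fun n : ℕ => dZ q q n • x) Filter.atTop (nhds 0)} =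
      {x : AddCircle (1 : ℝ) | (q : ℤ) • x = 0} := by
  ext x
  simp only [Set.mem_setOf_eq]
  constructor
  · intro h
    induction x using QuotientAddGroup.induction_on with
    | H r =>
    have h2 : Tendsto (fun n : ℕ => (2*n : ℕ)) atTop atTop :=
      tendsto_atTop_atTop.2 fun b => ⟨b, fun a ha => by omega⟩
    have h3 : Tendsto (fun n : ℕ => (2*n+1 : ℕ)) atTop atTop :=
      tendsto_atTop_atTop.2 fun b => ⟨b, fun a ha => by omega⟩
    have heven : Tendsto (fun n : ℕ => (q:ℤ)^n • ((r : ℝ) : AddCircle (1:ℝ))) atTop (nhds 0) := by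
      refine (h.comp h2).congr fun n => ?_
      simp only [Function.comp, dZ_even]
    obtain ⟨N, m, hm⟩ := aux_pow_int q hq r heven
    -- every pow with big enough exponent kills x
    have hint : ∀ e : ℕ, N ≤ e → (q:ℤ)^e • ((r : ℝ) : AddCircle (1:ℝ)) = 0 := by
      intro e he
      rw [← AddCircle.coe_zsmul]
      rw [AddCircle.coe_eq_zero_iff]
      refine ⟨(q:ℤ)^(e-N) * m, ?_⟩
      have : (q:ℝ)^e * r = (q:ℝ)^(e-N) * ((q:ℝ)^N * r) := by
        rw [← mul_assoc, ← pow_add]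
        congr 2
        omega
      rw [zsmul_eq_mul, mul_one, zsmul_eq_mul]
      push_cast
      rw [this, hm]
    have hodd : Tendsto (fun n : ℕ => dZ q q (2*n+1) • ((r : ℝ) : AddCircle (1:ℝ)))
        atTop (nhds 0) := h.comp h3
    have heq : ∀ᶠ n : ℕ in atTop,
        dZ q q (2*n+1) • ((r : ℝ) : AddCircle (1:ℝ)) = (q:ℤ) • ((r : ℝ) : AddCircle (1:ℝ)) := by
      filter_upwards [eventually_ge_atTop N] with n hn
      rw [dZ_odd, add_zsmul]
      have hsum : (∑ i ∈ Finset.range ((n+1)+1), (q:ℤ) ^ ((n+1)^3 - i*(n+1))) •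
          ((r : ℝ) : AddCircle (1:ℝ)) = 0 := by
        rw [Finset.sum_smul]
        refine Finset.sum_eq_zero fun i hi => ?_
        apply hint
        have hi' : i ≤ n+1 := by simpa [Nat.lt_succ_iff] using hi
        set M := n+1 with hM
        have h1 : i * M ≤ M * M := Nat.mul_le_mul_right _ hi'
        have e1 : N ≤ M*M*n := le_trans hn (Nat.le_mul_of_pos_left n (by positivity))
        have e2 : M*M*n + M*M = M^3 := by rw [hM]; ring
        omega
      rw [hsum, add_zero]
    have : Tendsto (fun _ : ℕ => (q:ℤ) • ((r : ℝ) : AddCircle (1:ℝ))) atTop (nhds 0) :=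
      hodd.congr' heq
    exact tendsto_nhds_unique tendsto_const_nhds this
  · intro h
    have hdvd : ∀ k : ℕ, 3 ≤ k → (q:ℤ) ∣ dZ q q k := by
      intro k hk
      unfold dZ
      by_cases hpar : k % 2 = 1
      · rw [if_pos hpar]
        refine dvd_add dvd_rfl (Finset.dvd_sum fun i hi => ?_)
        apply dvd_pow_self
        set M := (k+1)/2 with hM
        have hM2 : 2 ≤ M := by omega
        have hi' : i ≤ M := by
          have := Finset.mem_range.1 hi; omega
        have h1 : i * M ≤ M * M := Nat.mul_le_mul_right _ hi'
        have h2 : M * M < M^3 := by nlinarith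
        omega
      · rw [if_neg hpar]
        exact dvd_pow_self _ (by omega)
    have heq : ∀ᶠ k : ℕ in atTop, (0 : AddCircle (1:ℝ)) = dZ q q k • x := by
      filter_upwards [eventually_ge_atTop 3] with k hk
      obtain ⟨c, hc⟩ := hdvd k hk
      rw [hc, mul_comm, mul_zsmul, h, smul_zero]
    exact tendsto_const_nhds.congr' heq
end

section
/- Let q > 1 be an integer and define the sequence d in ℤ by d_{2n−1} = 1 + Σ_{i=0}^{n} q^{n³ − i·n} and d_{2n} = q^n for n ≥ 1. Then the subgroup of the circle 𝕋 = ℝ/ℤ characterized by d is trivial: {x ∈ 𝕋 : d_n • x → 0 as n → ∞} = {0}. -/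
open Filter Finset

lemma norm_qsmul (q : ℕ) (hq : 1 < q) (y : AddCircle (1 : ℝ))
    (h : ‖y‖ < 1 / (2 * q)) : ‖(q : ℤ) • y‖ = q * ‖y‖ := by
  induction y using QuotientAddGroup.induction_on with
  | H x =>
  have hq0 : (0 : ℝ) < q := by positivity
  have hcoe : ((q : ℤ) • (↑x : AddCircle (1 : ℝ))) = ((q * x : ℝ) : AddCircle (1 : ℝ)) := by
    rw [← QuotientAddGroup.mk_zsmul]
    norm_num
  have hn : ‖(↑x : AddCircle (1 : ℝ))‖ = |x - round x| := by
    rw [AddCircle.norm_eq]; norm_num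
  have hr : |x - round x| < 1 / (2 * q) := hn ▸ h
  have hhalf : (q : ℝ) * (1 / (2 * q)) = 1 / 2 := by field_simp
  have hround : round ((q : ℝ) * x) = q * round x := by
    have heq : (q : ℝ) * x = ((q * round x : ℤ) : ℝ) + q * (x - round x) := by push_cast; ring
    rw [heq, round_intCast_add]
    have h2 : round ((q : ℝ) * (x - round x)) = 0 := by
      rw [round_eq_zero_iff]
      constructor
      · nlinarith [abs_lt.mp hr]
      · nlinarith [abs_lt.mp hr]
    omega
  have hn2 : ‖(((q : ℝ) * x : ℝ) : AddCircle (1 : ℝ))‖ = |(q : ℝ) * x - round ((q : ℝ) * x)| := by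
    rw [AddCircle.norm_eq]; norm_num
  rw [hcoe, hn2, hround, hn]
  push_cast
  rw [show (q : ℝ) * x - (q : ℝ) * (round x : ℝ) = q * (x - round x) by ring, abs_mul,
    abs_of_pos hq0]

lemma pow_smul_eq_zero (q : ℕ) (hq : 1 < q) (x : AddCircle (1 : ℝ))
    (h : Filter.Tendsto (fun n : ℕ => (q : ℤ) ^ n • x) Filter.atTop (nhds 0)) :
    ∃ N : ℕ, (q : ℤ) ^ N • x = 0 := by
  have hq0 : (0 : ℝ) < q := by positivity
  have hnorm : Tendsto (fun n : ℕ => ‖(q : ℤ) ^ n • x‖) atTop (nhds 0) :=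
    tendsto_zero_iff_norm_tendsto_zero.mp h
  have hev : ∀ᶠ n in atTop, ‖(q : ℤ) ^ n • x‖ < 1 / (2 * q) := by
    have : (0:ℝ) < 1 / (2 * q) := by positivity
    exact hnorm.eventually (gt_mem_nhds this)
  obtain ⟨N, hN⟩ := eventually_atTop.mp hev
  refine ⟨N, ?_⟩
  have key : ∀ k : ℕ, ‖(q : ℤ) ^ (N + k) • x‖ = q ^ k * ‖(q : ℤ) ^ N • x‖ := by
    intro k
    induction k with
    | zero => simp
    | succ k ih =>
      have h1 : (q : ℤ) ^ (N + (k + 1)) • x = (q : ℤ) • ((q : ℤ) ^ (N + k) • x) := by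
        rw [← mul_smul, ← pow_succ']
        ring_nf
      have hlt : ‖(q : ℤ) ^ (N + k) • x‖ < 1 / (2 * q) := hN (N + k) (Nat.le_add_right _ _)
      rw [h1, norm_qsmul q hq ((q : ℤ) ^ (N + k) • x) hlt, ih]
      ring
  by_contra hne
  have hpos : 0 < ‖(q : ℤ) ^ N • x‖ := by
    rcases lt_or_eq_of_le (norm_nonneg ((q : ℤ) ^ N • x)) with h | h
    · exact h
    · exact absurd (norm_eq_zero.mp h.symm) hne
  obtain ⟨k, hk⟩ := pow_unbounded_of_one_lt ((1 / (2 * q)) / ‖(q : ℤ) ^ N • x‖)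
    (by exact_mod_cast hq : (1:ℝ) < q)
  have := hN (N + k) (Nat.le_add_right _ _)
  rw [key k] at this
  have : (1 / (2 * (q:ℝ))) / ‖(q : ℤ) ^ N • x‖ ≥ (q:ℝ) ^ k := by
    rw [ge_iff_le, le_div_iff₀ hpos]
    linarith
  linarith

/-- For `γ = 1` and `q > 1`, the subgroup of the circle `𝕋 = ℝ/ℤ` characterized by `d`
is trivial. -/
theorem statement16 (q : ℕ) (hq : 1 < q) :
    {x : AddCircle (1 : ℝ) |
        Filter.Tendsto (fun n : ℕ => dZ 1 q n • x) Filter.atTop (nhds 0)} =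
      {(0 : AddCircle (1 : ℝ))} := by
  ext x
  simp only [Set.mem_setOf_eq, Set.mem_singleton_iff]
  constructor
  · intro h
    have h2 : Tendsto (fun n : ℕ => 2 * n) atTop atTop :=
      tendsto_atTop_atTop_of_monotone (fun a b hab => by omega) (fun b => ⟨b, by omega⟩)
    have h3 : Tendsto (fun n : ℕ => 2 * n + 1) atTop atTop :=
      tendsto_atTop_atTop_of_monotone (fun a b hab => by omega) (fun b => ⟨b, by omega⟩)
    have hde : ∀ n : ℕ, dZ 1 q (2 * n) = (q : ℤ) ^ n := by
      intro n
      have h1 : (2 * n) % 2 = 0 := by omega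
      have h2 : (2 * n) / 2 = n := by omega
      simp [dZ, h1, h2]
    have hdo : ∀ n : ℕ, dZ 1 q (2 * n + 1) =
        1 + ∑ i ∈ Finset.range (n + 2), (q : ℤ) ^ ((n + 1) ^ 3 - i * (n + 1)) := by
      intro n
      have h1 : (2 * n + 1) % 2 = 1 := by omega
      have h2 : (2 * n + 1 + 1) / 2 = n + 1 := by omega
      simp [dZ, h1, h2]
    have heven : Tendsto (fun n : ℕ => (q : ℤ) ^ n • x) atTop (nhds 0) := by
      have hc := h.comp h2
      have : (fun n : ℕ => dZ 1 q n • x) ∘ (fun n : ℕ => 2 * n) = fun n : ℕ => (q : ℤ) ^ n • x := by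
        funext n; simp [Function.comp, hde n]
      rwa [this] at hc
    obtain ⟨N, hN⟩ := pow_smul_eq_zero q hq x heven
    have hzero : ∀ m : ℕ, N ≤ m → (q : ℤ) ^ m • x = 0 := by
      intro m hm
      rw [show m = N + (m - N) by omega, pow_add, mul_comm, mul_smul, hN, smul_zero]
    have hodd : Tendsto (fun n : ℕ => dZ 1 q (2 * n + 1) • x) atTop (nhds 0) := h.comp h3
    have hevc : ∀ᶠ n : ℕ in atTop, dZ 1 q (2 * n + 1) • x = x := by
      filter_upwards [eventually_ge_atTop N] with n hn
      rw [hdo n, add_smul, one_smul, Finset.sum_smul]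
      have hterm : ∀ i ∈ Finset.range (n + 2),
          (q : ℤ) ^ ((n + 1) ^ 3 - i * (n + 1)) • x = 0 := by
        intro i hi
        apply hzero
        have hi' : i ≤ n + 1 := by simpa [Nat.lt_succ_iff] using hi
        have e1 : (n + 1) ^ 3 = (n + 1) * (n + 1) * n + (n + 1) * (n + 1) := by ring
        have e2 : i * (n + 1) ≤ (n + 1) * (n + 1) := Nat.mul_le_mul_right _ hi'
        have e3 : n ≤ (n + 1) * (n + 1) * n := Nat.le_mul_of_pos_left n (by positivity)
        omega
      rw [Finset.sum_congr rfl hterm]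
      simp
    have : Tendsto (fun _ : ℕ => x) atTop (nhds 0) := hodd.congr' hevc
    exact tendsto_nhds_unique tendsto_const_nhds this
  · rintro rfl
    simp only [smul_zero]
    exact tendsto_const_nhds
end
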